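/- arXiv:1910.12161 — 7 statements merged into one kernel-verified Lean document; each statement's English description precedes it below -/
import Mathlib

section
/- For measurable f:(0,∞)→ℝ with ∫₀^∞ f(x)²/x dx < ∞, the inequality ∫₀^∞ (f(x)/x²)(∫₀^x f(y) dy) dx ≤ ∫₀^∞ f(x)²/x dx holds. -/
open MeasureTheory Set
open scoped ENNReal

theorem dual_hardy_inequality (f : ℝ → ℝ) (hf : Measurable f)
    (hint : IntegrableOn (fun x => f x ^ 2 / x) (Ioi 0)) :
    ∫ x in Ioi (0:ℝ), (f x / x ^ 2) * (∫ y in (0:ℝ)..x, f y) ≤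
      ∫ x in Ioi (0:ℝ), f x ^ 2 / x := by
  set R : ℝ := ∫ x in Ioi (0:ℝ), f x ^ 2 / x with hRdef
  have hg_nonneg : ∀ᵐ x ∂(volume.restrict (Ioi (0:ℝ))), 0 ≤ f x ^ 2 / x := by
    filter_upwards [ae_restrict_mem measurableSet_Ioi] with x hx
    exact div_nonneg (sq_nonneg _) hx.le
  have hR_nonneg : 0 ≤ R := integral_nonneg_of_ae hg_nonneg
  -- integrability of `f ^ 2` on `Ioc 0 x`
  have hsq_int : ∀ x : ℝ, 0 < x → IntegrableOn (fun y => f y ^ 2) (Ioc 0 x) := by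
    intro x hx
    have h1 : IntegrableOn (fun y => x * (f y ^ 2 / y)) (Ioc 0 x) :=
      (hint.mono_set Ioc_subset_Ioi_self).const_mul x
    refine h1.mono' (hf.pow_const 2).aestronglyMeasurable ?_
    filter_upwards [ae_restrict_mem measurableSet_Ioc] with y hy
    have hy0 : 0 < y := hy.1
    have hnn : 0 ≤ f y ^ 2 / y := div_nonneg (sq_nonneg _) hy0.le
    rw [Real.norm_eq_abs, abs_of_nonneg (sq_nonneg _)]
    calc f y ^ 2 = y * (f y ^ 2 / y) := by field_simp
      _ ≤ x * (f y ^ 2 / y) := mul_le_mul_of_nonneg_right hy.2 hnn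
  -- integrability of `f` on `Ioc 0 x`
  have hf_int : ∀ x : ℝ, 0 < x → IntegrableOn f (Ioc 0 x) := by
    intro x hx
    have h1 : IntegrableOn (fun y => (f y ^ 2 / y + y) / 2) (Ioc 0 x) :=
      ((hint.mono_set Ioc_subset_Ioi_self).add continuous_id.integrableOn_Ioc).div_const 2
    refine h1.mono' hf.aestronglyMeasurable ?_
    filter_upwards [ae_restrict_mem measurableSet_Ioc] with y hy
    have hy0 : 0 < y := hy.1
    have hy' : y ≠ 0 := hy0.ne'
    rw [Real.norm_eq_abs]
    have key : 2 * |f y| * y ≤ f y ^ 2 + y ^ 2 := by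
      nlinarith [sq_nonneg (|f y| - y), sq_abs (f y)]
    have h4 : 0 ≤ (f y ^ 2 + y ^ 2 - 2 * |f y| * y) / y :=
      div_nonneg (by linarith) hy0.le
    have h5 : (f y ^ 2 + y ^ 2 - 2 * |f y| * y) / y = f y ^ 2 / y + y - 2 * |f y| := by
      field_simp
    linarith
  -- the region of integration
  set S : Set (ℝ × ℝ) := {p : ℝ × ℝ | 0 < p.2} ∩ {p : ℝ × ℝ | p.2 ≤ p.1} with hSdef
  have hS : MeasurableSet S :=
    (measurableSet_lt measurable_const measurable_snd).inter
      (measurableSet_le measurable_snd measurable_fst)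
  have hSmem : ∀ x y : ℝ, ((x, y) ∈ S ↔ y ∈ Ioc 0 x) := by
    intro x y
    simp [hSdef, Set.mem_Ioc]
  set F : ℝ → ℝ := fun x => ∫ y in Ioc (0:ℝ) x, f y with hFdef
  set G : ℝ → ℝ := fun x => ∫ y in Ioc (0:ℝ) x, f y ^ 2 with hGdef
  have hF_sm : StronglyMeasurable F := by
    have h := (((hf.comp measurable_snd).indicator hS).stronglyMeasurable).integral_prod_right'
      (ν := volume)
    have hind : ∀ x : ℝ, (fun y => S.indicator (f ∘ Prod.snd) (x, y))
        = (Ioc (0:ℝ) x).indicator f := by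
      intro x
      funext y
      by_cases hy : y ∈ Ioc (0:ℝ) x
      · rw [indicator_of_mem ((hSmem x y).2 hy), indicator_of_mem hy]
        rfl
      · rw [indicator_of_notMem (fun h => hy ((hSmem x y).1 h)),
          indicator_of_notMem hy]
    have heq : (fun x => ∫ y, S.indicator (f ∘ Prod.snd) (x, y)) = F := by
      funext x
      rw [hind x, integral_indicator measurableSet_Ioc]
    rwa [heq] at h
  have hG_sm : StronglyMeasurable G := by
    have h := ((((hf.comp measurable_snd).pow_const 2).indicator
      hS).stronglyMeasurable).integral_prod_right' (ν := volume)
    have hind : ∀ x : ℝ, (fun y => S.indicator (fun p : ℝ × ℝ => (f ∘ Prod.snd) p ^ 2) (x, y))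
        = (Ioc (0:ℝ) x).indicator (fun y => f y ^ 2) := by
      intro x
      funext y
      by_cases hy : y ∈ Ioc (0:ℝ) x
      · rw [indicator_of_mem ((hSmem x y).2 hy), indicator_of_mem hy]
        rfl
      · rw [indicator_of_notMem (fun h => hy ((hSmem x y).1 h)),
          indicator_of_notMem hy]
    have heq : (fun x => ∫ y, S.indicator (fun p : ℝ × ℝ => (f ∘ Prod.snd) p ^ 2) (x, y)) = G := by
      funext x
      rw [hind x, integral_indicator measurableSet_Ioc]
    rwa [heq] at h
  set B : ℝ → ℝ := fun x => f x ^ 2 / (2 * x) + G x / (2 * x ^ 2) with hBdef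
  -- the key pointwise bound
  have key : ∀ x : ℝ, 0 < x → ‖(f x / x ^ 2) * F x‖ ≤ B x := by
    intro x hx
    have hx2 : (0:ℝ) < x ^ 2 := by positivity
    have hfi : IntegrableOn f (Ioc 0 x) := hf_int x hx
    have h1 : ‖(f x / x ^ 2) * F x‖ ≤ |f x| / x ^ 2 * ∫ y in Ioc (0:ℝ) x, |f y| := by
      rw [norm_mul, Real.norm_eq_abs, Real.norm_eq_abs, abs_div, abs_of_pos hx2]
      refine mul_le_mul_of_nonneg_left ?_ (div_nonneg (abs_nonneg _) hx2.le)
      simpa [Real.norm_eq_abs] using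
        norm_integral_le_integral_norm (μ := volume.restrict (Ioc (0:ℝ) x)) f
    have h2 : |f x| / x ^ 2 * ∫ y in Ioc (0:ℝ) x, |f y| =
        ∫ y in Ioc (0:ℝ) x, |f x| / x ^ 2 * |f y| :=
      (integral_const_mul _ _).symm
    have h3 : ∫ y in Ioc (0:ℝ) x, |f x| / x ^ 2 * |f y| ≤
        ∫ y in Ioc (0:ℝ) x, (f x ^ 2 + f y ^ 2) / (2 * x ^ 2) := by
      refine setIntegral_mono_on (hfi.abs.const_mul _)
        (((integrableOn_const measure_Ioc_lt_top.ne).add (hsq_int x hx)).div_const _)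
        measurableSet_Ioc ?_
      intro y _
      have h2ab : 2 * (|f x| * |f y|) ≤ f x ^ 2 + f y ^ 2 := by
        nlinarith [sq_nonneg (|f x| - |f y|), sq_abs (f x), sq_abs (f y)]
      have hrw : |f x| / x ^ 2 * |f y| = 2 * (|f x| * |f y|) / (2 * x ^ 2) := by
        field_simp
      rw [hrw]
      gcongr
    have h4 : ∫ y in Ioc (0:ℝ) x, (f x ^ 2 + f y ^ 2) / (2 * x ^ 2) = B x := by
      have hsplit : ∀ y : ℝ, (f x ^ 2 + f y ^ 2) / (2 * x ^ 2)
          = f x ^ 2 / (2 * x ^ 2) + f y ^ 2 / (2 * x ^ 2) := fun y => add_div _ _ _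
      simp_rw [hsplit]
      rw [integral_add (show Integrable (fun _ : ℝ => f x ^ 2 / (2 * x ^ 2)) (volume.restrict (Ioc (0:ℝ) x)) from
          integrableOn_const measure_Ioc_lt_top.ne)
        ((hsq_int x hx).div_const _), integral_div, setIntegral_const, Real.volume_real_Ioc_of_le hx.le,
        smul_eq_mul, sub_zero]
      have hxne : x ≠ 0 := hx.ne'
      rw [integral_div]
      simp only [hBdef, hGdef]
      field_simp
    calc ‖(f x / x ^ 2) * F x‖ ≤ |f x| / x ^ 2 * ∫ y in Ioc (0:ℝ) x, |f y| := h1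
      _ = ∫ y in Ioc (0:ℝ) x, |f x| / x ^ 2 * |f y| := h2
      _ ≤ ∫ y in Ioc (0:ℝ) x, (f x ^ 2 + f y ^ 2) / (2 * x ^ 2) := h3
      _ = B x := h4
  -- the Tonelli computation
  set φ : ℝ → ℝ≥0∞ := fun y => ENNReal.ofReal (f y ^ 2) with hφdef
  have hφ_meas : Measurable φ := (hf.pow_const 2).ennreal_ofReal
  set W : ℝ × ℝ → ℝ≥0∞ := fun p => ENNReal.ofReal ((p.1 ^ 2)⁻¹) * φ p.2 with hWdef
  set k : ℝ → ℝ → ℝ≥0∞ := fun x y => S.indicator W (x, y) with hkdef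
  have hk_meas : Measurable (Function.uncurry k) := by
    have huncurry : Function.uncurry k = S.indicator W := by
      funext p
      simp [Function.uncurry, hkdef]
    rw [huncurry]
    exact ((measurable_fst.pow_const 2).inv.ennreal_ofReal.mul
      (hφ_meas.comp measurable_snd)).indicator hS
  set L : ℝ → ℝ≥0∞ := fun x => ∫⁻ y in Ioc (0:ℝ) x, φ y with hLdef
  have hinner : ∀ x : ℝ, (∫⁻ y, k x y) = ENNReal.ofReal ((x ^ 2)⁻¹) * L x := by
    intro x
    have hkx : (fun y => k x y)
        = (Ioc (0:ℝ) x).indicator (fun y => ENNReal.ofReal ((x ^ 2)⁻¹) * φ y) := by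
      funext y
      by_cases hy : y ∈ Ioc (0:ℝ) x
      · simp only [hkdef]
        rw [indicator_of_mem ((hSmem x y).2 hy), indicator_of_mem hy]
      · simp only [hkdef]
        rw [indicator_of_notMem (fun h => hy ((hSmem x y).1 h)), indicator_of_notMem hy]
    rw [hkx, lintegral_indicator measurableSet_Ioc, lintegral_const_mul _ hφ_meas]
  have houter : ∀ y : ℝ, (∫⁻ x, k x y)
      = (Ioi (0:ℝ)).indicator (fun y => ENNReal.ofReal (f y ^ 2 / y)) y := by
    intro y
    rcases le_or_gt y 0 with hy | hy
    · have hzero : (fun x => k x y) = fun _ => 0 := by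
        funext x
        simp only [hkdef]
        exact indicator_of_notMem (fun h => absurd ((hSmem x y).1 h).1 (not_lt.2 hy)) _
      rw [hzero, lintegral_zero, indicator_of_notMem (by simpa using hy)]
    · have hky : (fun x => k x y)
          = (Ici y).indicator (fun x => ENNReal.ofReal ((x ^ 2)⁻¹) * φ y) := by
        funext x
        by_cases hx : y ≤ x
        · simp only [hkdef]
          rw [indicator_of_mem ((hSmem x y).2 ⟨hy, hx⟩), indicator_of_mem (mem_Ici.2 hx)]
        · simp only [hkdef]
          rw [indicator_of_notMem (fun h => hx ((hSmem x y).1 h).2),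
            indicator_of_notMem (fun h => hx (mem_Ici.1 h))]
      have hJ : (∫⁻ x in Ici y, ENNReal.ofReal ((x ^ 2)⁻¹)) = ENNReal.ofReal y⁻¹ := by
        rw [← Measure.restrict_congr_set (Ioi_ae_eq_Ici (a := y))]
        have hInt : IntegrableOn (fun x : ℝ => (x ^ 2)⁻¹) (Ioi y) := by
          refine (integrableOn_Ioi_rpow_of_lt (by norm_num : (-2:ℝ) < -1) hy).congr_fun
            ?_ measurableSet_Ioi
          intro x hx
          have hx0 : 0 < x := hy.trans hx
          simp [Real.rpow_neg hx0.le, Real.rpow_two]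
        rw [← ofReal_integral_eq_lintegral_ofReal hInt
          (ae_of_all _ fun x => by positivity)]
        congr 1
        rw [setIntegral_congr_fun measurableSet_Ioi
          (show EqOn (fun x : ℝ => (x ^ 2)⁻¹) (fun x : ℝ => x ^ (-2:ℝ)) (Ioi y) from
            fun x hx => by
              have hx0 : 0 < x := hy.trans hx
              simp [Real.rpow_neg hx0.le, Real.rpow_two]),
          integral_Ioi_rpow_of_lt (by norm_num) hy]
        norm_num [Real.rpow_neg_one]
      rw [hky, lintegral_indicator measurableSet_Ici,
        lintegral_mul_const' _ _ ENNReal.ofReal_ne_top, hJ, indicator_of_mem (mem_Ioi.2 hy)]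
      show ENNReal.ofReal y⁻¹ * ENNReal.ofReal (f y ^ 2) = ENNReal.ofReal (f y ^ 2 / y)
      rw [← ENNReal.ofReal_mul (inv_nonneg.2 hy.le), inv_mul_eq_div]
  have hswap := lintegral_lintegral_swap (μ := volume) (ν := volume) hk_meas.aemeasurable
  have hT : (∫⁻ x in Ioi (0:ℝ), ENNReal.ofReal ((x ^ 2)⁻¹) * L x) ≤ ENNReal.ofReal R := by
    calc (∫⁻ x in Ioi (0:ℝ), ENNReal.ofReal ((x ^ 2)⁻¹) * L x)
        ≤ ∫⁻ x, ENNReal.ofReal ((x ^ 2)⁻¹) * L x := setLIntegral_le_lintegral _ _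
      _ = ∫⁻ x, ∫⁻ y, k x y := lintegral_congr fun x => (hinner x).symm
      _ = ∫⁻ y, ∫⁻ x, k x y := hswap
      _ = ∫⁻ y, (Ioi (0:ℝ)).indicator (fun y => ENNReal.ofReal (f y ^ 2 / y)) y :=
          lintegral_congr houter
      _ = ∫⁻ y in Ioi (0:ℝ), ENNReal.ofReal (f y ^ 2 / y) :=
          lintegral_indicator measurableSet_Ioi _
      _ = ENNReal.ofReal R := (ofReal_integral_eq_lintegral_ofReal hint hg_nonneg).symm
  -- the harder half : `∫ G x / (2 x²) ≤ R / 2`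
  have hG_nonneg : ∀ x, 0 ≤ G x := fun x => integral_nonneg fun y => sq_nonneg _
  have hG_eq : ∀ x : ℝ, 0 < x → ENNReal.ofReal (G x) = L x := by
    intro x hx
    exact ofReal_integral_eq_lintegral_ofReal (hsq_int x hx)
      (ae_of_all _ fun y => sq_nonneg _)
  have hH_lint : (∫⁻ x in Ioi (0:ℝ), ENNReal.ofReal (G x / (2 * x ^ 2)))
      ≤ ENNReal.ofReal (R / 2) := by
    have hcongr : ∀ᵐ x ∂(volume.restrict (Ioi (0:ℝ))),
        ENNReal.ofReal (G x / (2 * x ^ 2))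
          = ENNReal.ofReal 2⁻¹ * (ENNReal.ofReal ((x ^ 2)⁻¹) * L x) := by
      filter_upwards [ae_restrict_mem measurableSet_Ioi] with x hx
      rw [← hG_eq x hx, ← ENNReal.ofReal_mul (by positivity),
        ← ENNReal.ofReal_mul (by positivity)]
      congr 1
      rw [div_eq_mul_inv, mul_inv]
      ring
    rw [lintegral_congr_ae hcongr, lintegral_const_mul' _ _ ENNReal.ofReal_ne_top]
    calc ENNReal.ofReal 2⁻¹ * ∫⁻ x in Ioi (0:ℝ), ENNReal.ofReal ((x ^ 2)⁻¹) * L x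
        ≤ ENNReal.ofReal 2⁻¹ * ENNReal.ofReal R := mul_le_mul_right hT _
      _ = ENNReal.ofReal (R / 2) := by
          rw [← ENNReal.ofReal_mul (by norm_num)]
          congr 1
          ring
  have hH_nonneg : ∀ x : ℝ, 0 ≤ G x / (2 * x ^ 2) := fun x =>
    div_nonneg (hG_nonneg x) (by positivity)
  have hH_meas : AEStronglyMeasurable (fun x => G x / (2 * x ^ 2))
      (volume.restrict (Ioi (0:ℝ))) :=
    (hG_sm.measurable.div ((measurable_id.pow_const 2).const_mul 2)).aestronglyMeasurable
  have hH_int : IntegrableOn (fun x => G x / (2 * x ^ 2)) (Ioi (0:ℝ)) := by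
    refine ⟨hH_meas, ?_⟩
    rw [hasFiniteIntegral_iff_ofReal (ae_of_all _ hH_nonneg)]
    exact lt_of_le_of_lt hH_lint ENNReal.ofReal_lt_top
  have hH_val : (∫ x in Ioi (0:ℝ), G x / (2 * x ^ 2)) ≤ R / 2 := by
    rw [integral_eq_lintegral_of_nonneg_ae (ae_of_all _ hH_nonneg) hH_meas]
    calc (∫⁻ x in Ioi (0:ℝ), ENNReal.ofReal (G x / (2 * x ^ 2))).toReal
        ≤ (ENNReal.ofReal (R / 2)).toReal :=
          ENNReal.toReal_mono ENNReal.ofReal_ne_top hH_lint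
      _ = R / 2 := ENNReal.toReal_ofReal (by linarith)
  -- the easy half
  have hfirst_eq : (fun x : ℝ => f x ^ 2 / (2 * x)) = fun x => (f x ^ 2 / x) / 2 := by
    funext x
    rw [div_div, mul_comm]
  have hfirst_int : IntegrableOn (fun x => f x ^ 2 / (2 * x)) (Ioi (0:ℝ)) := by
    rw [hfirst_eq]
    exact hint.div_const 2
  have hfirst_val : (∫ x in Ioi (0:ℝ), f x ^ 2 / (2 * x)) = R / 2 := by
    rw [hfirst_eq]
    rw [integral_div]
  have hB_int : IntegrableOn B (Ioi (0:ℝ)) := by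
    rw [hBdef]
    exact hfirst_int.add hH_int
  have hB_val : (∫ x in Ioi (0:ℝ), B x) ≤ R := by
    simp only [hBdef]
    rw [integral_add hfirst_int hH_int, hfirst_val]
    linarith [hH_val]
  -- conclusion
  have key_ae : ∀ᵐ x ∂(volume.restrict (Ioi (0:ℝ))), ‖(f x / x ^ 2) * F x‖ ≤ ‖B x‖ := by
    filter_upwards [ae_restrict_mem measurableSet_Ioi] with x hx
    have hBpos : 0 ≤ B x := by
      simp only [hBdef]
      have hx0 : (0:ℝ) < x := hx
      have : (0:ℝ) ≤ f x ^ 2 / (2 * x) := div_nonneg (sq_nonneg _) (by linarith)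
      linarith [hH_nonneg x]
    rw [Real.norm_eq_abs (B x), abs_of_nonneg hBpos]
    exact key x hx
  have hlhs_meas : AEStronglyMeasurable (fun x => (f x / x ^ 2) * F x)
      (volume.restrict (Ioi (0:ℝ))) :=
    ((hf.div (measurable_id.pow_const 2)).mul hF_sm.measurable).aestronglyMeasurable
  have hlhs_int : IntegrableOn (fun x => (f x / x ^ 2) * F x) (Ioi (0:ℝ)) :=
    Integrable.mono hB_int hlhs_meas key_ae
  have hgoal_eq : (∫ x in Ioi (0:ℝ), (f x / x ^ 2) * (∫ y in (0:ℝ)..x, f y))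
      = ∫ x in Ioi (0:ℝ), (f x / x ^ 2) * F x := by
    refine integral_congr_ae ?_
    filter_upwards [ae_restrict_mem measurableSet_Ioi] with x hx
    rw [intervalIntegral.integral_of_le hx.le]
  rw [hgoal_eq]
  calc (∫ x in Ioi (0:ℝ), (f x / x ^ 2) * F x) ≤ ∫ x in Ioi (0:ℝ), B x := by
        refine integral_mono_ae hlhs_int hB_int ?_
        filter_upwards [ae_restrict_mem measurableSet_Ioi] with x hx
        have hk := key x hx
        rw [Real.norm_eq_abs] at hk
        exact le_trans (le_abs_self _) hk
    _ ≤ R := hB_val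
end

section
/- For measurable f:(0,∞)→ℝ, ∫₀^∞ (1/x)((1/x)∫₀^x f(y) dy)² dx ≤ ∫₀^∞ f(x)²/x dx. -/
open MeasureTheory Set
open scoped ENNReal NNReal

lemma hardy_pointwise (f : ℝ → ℝ) (hf : Measurable f) {x : ℝ} (hx : 0 < x) :
    ENNReal.ofReal ((1 / x) * ((1 / x) * ∫ y in (0:ℝ)..x, f y) ^ 2) ≤
      ENNReal.ofReal (1 / x ^ 2) * ∫⁻ y in Ioc (0:ℝ) x, ENNReal.ofReal (f y ^ 2) := by
  set F : ℝ := ∫ y in (0:ℝ)..x, f y with hF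
  have hFset : F = ∫ y in Ioc (0:ℝ) x, f y := intervalIntegral.integral_of_le hx.le
  have h1 : ENNReal.ofReal ((1 / x) * ((1 / x) * F) ^ 2)
      = ENNReal.ofReal (1 / x ^ 3) * (‖F‖₊ : ℝ≥0∞) ^ 2 := by
    have h : (1 / x) * ((1 / x) * F) ^ 2 = (1 / x ^ 3) * F ^ 2 := by ring
    rw [h, ENNReal.ofReal_mul (by positivity)]
    congr 1
    have h2 : F ^ 2 = ‖F‖ ^ 2 := by rw [Real.norm_eq_abs, sq_abs]
    rw [h2, ENNReal.ofReal_pow (norm_nonneg _), ofReal_norm, enorm_eq_nnnorm]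
  have h2 : (‖F‖₊ : ℝ≥0∞) ≤ ∫⁻ y in Ioc (0:ℝ) x, (‖f y‖₊ : ℝ≥0∞) := by
    rw [hFset]
    exact enorm_integral_le_lintegral_enorm _
  have hconj : (2:ℝ).HolderConjugate 2 := Real.HolderConjugate.two_two
  have h3 : (∫⁻ y in Ioc (0:ℝ) x, (‖f y‖₊ : ℝ≥0∞))
      ≤ (∫⁻ y in Ioc (0:ℝ) x, (‖f y‖₊ : ℝ≥0∞) ^ (2:ℝ)) ^ (1/2 : ℝ)
        * (∫⁻ y in Ioc (0:ℝ) x, (1:ℝ≥0∞) ^ (2:ℝ)) ^ (1/2 : ℝ) := by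
    have := ENNReal.lintegral_mul_le_Lp_mul_Lq (volume.restrict (Ioc (0:ℝ) x)) hconj
      (f := fun y => (‖f y‖₊ : ℝ≥0∞)) (g := fun _ => (1:ℝ≥0∞))
      hf.enorm.aemeasurable aemeasurable_const
    simpa using this
  have hsq : ∀ y : ℝ, ((‖f y‖₊ : ℝ≥0∞)) ^ (2:ℝ) = ENNReal.ofReal (f y ^ 2) := by
    intro y
    rw [← enorm_eq_nnnorm, ← ofReal_norm,
      ENNReal.ofReal_rpow_of_nonneg (norm_nonneg _) (by norm_num : (0:ℝ) ≤ 2)]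
    congr 1
    rw [show ((2:ℝ)) = ((2:ℕ):ℝ) by norm_num, Real.rpow_natCast, Real.norm_eq_abs, sq_abs]
  have hvol : (∫⁻ _ in Ioc (0:ℝ) x, (1:ℝ≥0∞) ^ (2:ℝ)) = ENNReal.ofReal x := by
    simp [Real.volume_Ioc]
  set I : ℝ≥0∞ := ∫⁻ y in Ioc (0:ℝ) x, ENNReal.ofReal (f y ^ 2) with hI
  have h3' : (∫⁻ y in Ioc (0:ℝ) x, (‖f y‖₊ : ℝ≥0∞))
      ≤ I ^ (1/2 : ℝ) * (ENNReal.ofReal x) ^ (1/2 : ℝ) := by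
    calc (∫⁻ y in Ioc (0:ℝ) x, (‖f y‖₊ : ℝ≥0∞))
        ≤ (∫⁻ y in Ioc (0:ℝ) x, (‖f y‖₊ : ℝ≥0∞) ^ (2:ℝ)) ^ (1/2 : ℝ)
          * (∫⁻ y in Ioc (0:ℝ) x, (1:ℝ≥0∞) ^ (2:ℝ)) ^ (1/2 : ℝ) := h3
      _ = I ^ (1/2 : ℝ) * (ENNReal.ofReal x) ^ (1/2 : ℝ) := by
          rw [hvol]
          congr 2
          exact lintegral_congr fun y => hsq y
  have hsq2 : (‖F‖₊ : ℝ≥0∞) ^ 2 ≤ I * ENNReal.ofReal x := by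
    calc (‖F‖₊ : ℝ≥0∞) ^ 2 ≤ (I ^ (1/2 : ℝ) * (ENNReal.ofReal x) ^ (1/2 : ℝ)) ^ 2 :=
          pow_le_pow_left₀ zero_le (h2.trans h3') 2
      _ = I * ENNReal.ofReal x := by
          rw [mul_pow, ← ENNReal.rpow_natCast (I ^ (1/2:ℝ)) 2,
            ← ENNReal.rpow_natCast ((ENNReal.ofReal x) ^ (1/2:ℝ)) 2,
            ← ENNReal.rpow_mul, ← ENNReal.rpow_mul]
          norm_num
  calc ENNReal.ofReal ((1 / x) * ((1 / x) * F) ^ 2)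
      = ENNReal.ofReal (1 / x ^ 3) * (‖F‖₊ : ℝ≥0∞) ^ 2 := h1
    _ ≤ ENNReal.ofReal (1 / x ^ 3) * (I * ENNReal.ofReal x) :=
        mul_le_mul_right hsq2 _
    _ = (ENNReal.ofReal (1 / x ^ 3) * ENNReal.ofReal x) * I := by ring
    _ = ENNReal.ofReal (1 / x ^ 2) * I := by
        rw [← ENNReal.ofReal_mul (by positivity)]
        congr 1
        field_simp

theorem generalized_hardy_inequality (f : ℝ → ℝ) (hf : Measurable f) :
    ∫⁻ x in Ioi (0:ℝ), ENNReal.ofReal ((1 / x) * ((1 / x) * ∫ y in (0:ℝ)..x, f y) ^ 2) ≤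
      ∫⁻ x in Ioi (0:ℝ), ENNReal.ofReal (f x ^ 2 / x) := by
  set g : ℝ → ℝ≥0∞ := fun y => ENNReal.ofReal (f y ^ 2) with hg
  have hgmeas : Measurable g := (hf.pow_const 2).ennreal_ofReal
  have step1 : ∫⁻ x in Ioi (0:ℝ), ENNReal.ofReal ((1 / x) * ((1 / x) * ∫ y in (0:ℝ)..x, f y) ^ 2)
      ≤ ∫⁻ x in Ioi (0:ℝ), ENNReal.ofReal (1 / x ^ 2) * ∫⁻ y in Ioc (0:ℝ) x, g y :=
    lintegral_mono_ae (ae_restrict_of_forall_mem measurableSet_Ioi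
      fun x hx => hardy_pointwise f hf hx)
  set φ : ℝ → ℝ → ℝ≥0∞ := fun x y =>
    (Ioc (0:ℝ) x).indicator (fun y => ENNReal.ofReal (1 / x ^ 2) * g y) y with hφ
  have hset : MeasurableSet {p : ℝ × ℝ | 0 < p.2 ∧ p.2 ≤ p.1} :=
    (measurableSet_lt measurable_const measurable_snd).inter
      (measurableSet_le measurable_snd measurable_fst)
  have hφmeas : Measurable (Function.uncurry φ) := by
    have heq : Function.uncurry φ = fun p : ℝ × ℝ =>
        ({p : ℝ × ℝ | 0 < p.2 ∧ p.2 ≤ p.1}).indicator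
          (fun p => ENNReal.ofReal (1 / p.1 ^ 2) * g p.2) p := by
      ext p
      simp only [Function.uncurry, hφ, Set.indicator, Set.mem_Ioc, Set.mem_setOf_eq]
    rw [heq]
    exact Measurable.indicator
      (((measurable_fst.pow_const 2).const_div 1).ennreal_ofReal.mul
        (hgmeas.comp measurable_snd)) hset
  have eq1 : ∀ x ∈ Ioi (0:ℝ),
      ENNReal.ofReal (1 / x ^ 2) * ∫⁻ y in Ioc (0:ℝ) x, g y = ∫⁻ y in Ioi (0:ℝ), φ x y := by
    intro x hx
    rw [hφ]
    rw [lintegral_indicator measurableSet_Ioc, Measure.restrict_restrict measurableSet_Ioc,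
      inter_eq_left.mpr Ioc_subset_Ioi_self, lintegral_const_mul _ hgmeas]
  have eq2 : ∀ y ∈ Ioi (0:ℝ),
      ∫⁻ x in Ioi (0:ℝ), φ x y = g y * ENNReal.ofReal (1 / y) := by
    intro y hy
    have hy : (0:ℝ) < y := hy
    have hind : ∀ x : ℝ, φ x y = (Ici y).indicator
        (fun x => ENNReal.ofReal (1 / x ^ 2) * g y) x := by
      intro x
      simp only [hφ, Set.indicator, Set.mem_Ioc, Set.mem_Ici]
      by_cases h : y ≤ x
      · simp [h, hy]
      · simp [h]
    calc ∫⁻ x in Ioi (0:ℝ), φ x y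
        = ∫⁻ x in Ioi (0:ℝ), (Ici y).indicator (fun x => ENNReal.ofReal (1 / x ^ 2) * g y) x :=
          lintegral_congr hind
      _ = ∫⁻ x in Ici y, ENNReal.ofReal (1 / x ^ 2) * g y := by
          rw [lintegral_indicator measurableSet_Ici, Measure.restrict_restrict measurableSet_Ici]
          have hI : Ici y ∩ Ioi (0:ℝ) = Ici y := inter_eq_left.mpr fun z hz => hy.trans_le hz
          rw [hI]
      _ = (∫⁻ x in Ici y, ENNReal.ofReal (1 / x ^ 2)) * g y :=
          lintegral_mul_const _ (by fun_prop)
      _ = g y * ENNReal.ofReal (1 / y) := by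
          rw [mul_comm]
          congr 1
          calc (∫⁻ x in Ici y, ENNReal.ofReal (1 / x ^ 2))
              = ∫⁻ x in Ioi y, ENNReal.ofReal (1 / x ^ 2) := by
                rw [Measure.restrict_congr_set Ioi_ae_eq_Ici.symm]
            _ = ∫⁻ x in Ioi y, ENNReal.ofReal (x ^ (-2:ℝ)) := by
                refine setLIntegral_congr_fun measurableSet_Ioi (fun x hx => ?_)
                have hx0 : (0:ℝ) < x := hy.trans hx
                rw [Real.rpow_neg hx0.le, show ((2:ℝ)) = ((2:ℕ):ℝ) by norm_num,
                  Real.rpow_natCast, one_div]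
            _ = ENNReal.ofReal (∫ x in Ioi y, x ^ (-2:ℝ)) := by
                rw [← ofReal_integral_eq_lintegral_ofReal
                  (integrableOn_Ioi_rpow_of_lt (by norm_num) hy)
                  (ae_restrict_of_forall_mem measurableSet_Ioi fun x hx =>
                    Real.rpow_nonneg (hy.trans hx).le _)]
            _ = ENNReal.ofReal (1 / y) := by
                rw [integral_Ioi_rpow_of_lt (by norm_num) hy]
                norm_num [Real.rpow_neg_one, one_div]
  calc ∫⁻ x in Ioi (0:ℝ), ENNReal.ofReal ((1 / x) * ((1 / x) * ∫ y in (0:ℝ)..x, f y) ^ 2)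
      ≤ ∫⁻ x in Ioi (0:ℝ), ENNReal.ofReal (1 / x ^ 2) * ∫⁻ y in Ioc (0:ℝ) x, g y := step1
    _ = ∫⁻ x in Ioi (0:ℝ), ∫⁻ y in Ioi (0:ℝ), φ x y :=
        setLIntegral_congr_fun measurableSet_Ioi eq1
    _ = ∫⁻ y in Ioi (0:ℝ), ∫⁻ x in Ioi (0:ℝ), φ x y :=
        lintegral_lintegral_swap hφmeas.aemeasurable
    _ = ∫⁻ y in Ioi (0:ℝ), g y * ENNReal.ofReal (1 / y) :=
        setLIntegral_congr_fun measurableSet_Ioi eq2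
    _ = ∫⁻ y in Ioi (0:ℝ), ENNReal.ofReal (f y ^ 2 / y) := by
        refine setLIntegral_congr_fun measurableSet_Ioi (fun y hy => ?_)
        rw [hg, ← ENNReal.ofReal_mul (sq_nonneg _)]
        congr 1
        field_simp
end

section
/- For p > 1, r > 1, and measurable nonnegative f:(0,∞)→ℝ, ∫₀^∞ x^{-r} (∫₀^x f(y) dy)^p dx ≤ (p/(r-1))^p ∫₀^∞ x^{-r} (x f(x))^p dx. -/
open MeasureTheory Set
open scoped ENNReal

lemma aux_lintegral_rpow_Ioo {e x : ℝ} (he : -1 < e) (hx : 0 < x) :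
    ∫⁻ y in Ioo (0:ℝ) x, ENNReal.ofReal (y ^ e) = ENNReal.ofReal (x ^ (e+1) / (e+1)) := by
  have hint : IntegrableOn (fun y : ℝ => y ^ e) (Ioo 0 x) := by
    have h := intervalIntegral.intervalIntegrable_rpow' (a := 0) (b := x) he
    rw [intervalIntegrable_iff_integrableOn_Ioc_of_le hx.le] at h
    exact h.mono_set Ioo_subset_Ioc_self
  rw [← ofReal_integral_eq_lintegral_ofReal hint]
  · congr 1
    rw [← integral_Ioc_eq_integral_Ioo, ← intervalIntegral.integral_of_le hx.le,
      integral_rpow (Or.inl he), Real.zero_rpow (by linarith : e + 1 ≠ 0)]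
    ring
  · exact ae_restrict_of_forall_mem measurableSet_Ioo
      (fun y hy => Real.rpow_nonneg hy.1.le e)

lemma aux_lintegral_rpow_Ioi {e y : ℝ} (he : e < -1) (hy : 0 < y) :
    ∫⁻ x in Ioi y, ENNReal.ofReal (x ^ e) = ENNReal.ofReal (y ^ (e+1) / (-(e+1))) := by
  rw [← ofReal_integral_eq_lintegral_ofReal (integrableOn_Ioi_rpow_of_lt he hy)]
  · congr 1
    rw [integral_Ioi_rpow_of_lt he hy, div_neg, neg_div]
  · exact ae_restrict_of_forall_mem measurableSet_Ioi
      (fun x hx => Real.rpow_nonneg (hy.trans hx).le e)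

theorem hardy_littlewood_polya_330 (p r : ℝ) (hp : 1 < p) (hr : 1 < r)
    (f : ℝ → ℝ) (hf : Measurable f) (hf0 : ∀ x, 0 ≤ f x) :
    ∫⁻ x in Ioi (0:ℝ), (ENNReal.ofReal x) ^ (-r) * (∫⁻ y in Ioo (0:ℝ) x, ENNReal.ofReal (f y)) ^ p ≤
      ENNReal.ofReal ((p / (r - 1)) ^ p) *
        ∫⁻ x in Ioi (0:ℝ), ENNReal.ofReal (x ^ (-r) * (x * f x) ^ p) := by
  have hp0 : (0:ℝ) < p := by linarith
  set s : ℝ := (r - 1) / p with hs_def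
  have hs : 0 < s := div_pos (by linarith) hp0
  have hsp : s * p = r - 1 := by rw [hs_def]; field_simp
  have hpr : (p / (r - 1)) ^ p = s ^ (-p) := by
    rw [show p / (r-1) = s⁻¹ from by rw [← hsp]; field_simp,
      Real.inv_rpow hs.le, ← Real.rpow_neg hs.le]
  clear_value s
  set q : ℝ := p / (p - 1) with hq_def
  have hpq : p.HolderConjugate q := Real.HolderConjugate.conjExponent hp
  set a : ℝ := (1 - s) * (p - 1) / p with ha_def
  have hap : a * p = (1 - s) * (p - 1) := by rw [ha_def]; field_simp
  have hp1 : p - 1 ≠ 0 := sub_ne_zero.mpr hp.ne'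
  have haq : -a * q = s - 1 := by
    rw [ha_def, hq_def]
    field_simp
    ring
  clear_value q a
  set G : ℝ → ℝ≥0∞ := fun y => ENNReal.ofReal (f y) ^ p * ENNReal.ofReal (y ^ ((1-s)*(p-1)))
    with hG_def
  have hGmeas : Measurable G :=
    ((hf.ennreal_ofReal).pow_const p).mul
      ((measurable_id.pow_const _).ennreal_ofReal)
  have hGtop : ∀ y, G y ≠ ∞ := fun y =>
    ENNReal.mul_ne_top (ENNReal.rpow_ne_top_of_nonneg hp0.le ENNReal.ofReal_ne_top)
      ENNReal.ofReal_ne_top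
  -- Step 1: Hölder pointwise bound
  have step1 : ∀ x : ℝ, 0 < x →
      (∫⁻ y in Ioo (0:ℝ) x, ENNReal.ofReal (f y)) ^ p ≤
        (∫⁻ y in Ioo (0:ℝ) x, G y) * ENNReal.ofReal ((x ^ s / s) ^ (p - 1)) := by
    intro x hx
    have hsplit : ∫⁻ y in Ioo (0:ℝ) x, ENNReal.ofReal (f y) =
        ∫⁻ y in Ioo (0:ℝ) x,
          ((fun y => ENNReal.ofReal (f y) * ENNReal.ofReal (y ^ a)) *
           (fun y => ENNReal.ofReal (y ^ (-a)))) y := by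
      refine lintegral_congr_ae (ae_restrict_of_forall_mem measurableSet_Ioo fun y hy => ?_)
      have hy0 : 0 < y := hy.1
      simp only [Pi.mul_apply]
      rw [mul_assoc, ← ENNReal.ofReal_mul (Real.rpow_nonneg hy0.le a),
        ← Real.rpow_add hy0, add_neg_cancel, Real.rpow_zero, ENNReal.ofReal_one, mul_one]
    have hHolder := ENNReal.lintegral_mul_le_Lp_mul_Lq (volume.restrict (Ioo (0:ℝ) x)) hpq
      (f := fun y => ENNReal.ofReal (f y) * ENNReal.ofReal (y ^ a))
      (g := fun y => ENNReal.ofReal (y ^ (-a)))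
      ((hf.ennreal_ofReal.mul ((measurable_id.pow_const _).ennreal_ofReal)).aemeasurable)
      (((measurable_id.pow_const _).ennreal_ofReal).aemeasurable)
    rw [← hsplit] at hHolder
    have hXeq : ∫⁻ y in Ioo (0:ℝ) x,
        (ENNReal.ofReal (f y) * ENNReal.ofReal (y ^ a)) ^ p = ∫⁻ y in Ioo (0:ℝ) x, G y := by
      refine lintegral_congr_ae (ae_restrict_of_forall_mem measurableSet_Ioo fun y hy => ?_)
      have hy0 : 0 < y := hy.1
      simp only [hG_def]
      rw [ENNReal.mul_rpow_of_nonneg _ _ hp0.le,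
        ENNReal.ofReal_rpow_of_pos (Real.rpow_pos_of_pos hy0 a),
        ← Real.rpow_mul hy0.le, hap]
    have hYeq : ∫⁻ y in Ioo (0:ℝ) x, (ENNReal.ofReal (y ^ (-a))) ^ q
        = ENNReal.ofReal (x ^ s / s) := by
      have heq : ∫⁻ y in Ioo (0:ℝ) x, (ENNReal.ofReal (y ^ (-a))) ^ q
          = ∫⁻ y in Ioo (0:ℝ) x, ENNReal.ofReal (y ^ (s - 1)) := by
        refine lintegral_congr_ae (ae_restrict_of_forall_mem measurableSet_Ioo fun y hy => ?_)
        have hy0 : 0 < y := hy.1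
        simp only []
        rw [ENNReal.ofReal_rpow_of_pos (Real.rpow_pos_of_pos hy0 _),
          ← Real.rpow_mul hy0.le, haq]
      rw [heq, aux_lintegral_rpow_Ioo (by linarith) hx, sub_add_cancel]
    rw [hXeq, hYeq] at hHolder
    calc (∫⁻ y in Ioo (0:ℝ) x, ENNReal.ofReal (f y)) ^ p
        ≤ ((∫⁻ y in Ioo (0:ℝ) x, G y) ^ (1/p) * ENNReal.ofReal (x ^ s / s) ^ (1/q)) ^ p :=
          ENNReal.rpow_le_rpow hHolder hp0.le
      _ = (∫⁻ y in Ioo (0:ℝ) x, G y) * ENNReal.ofReal ((x ^ s / s) ^ (p - 1)) := by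
          rw [ENNReal.mul_rpow_of_nonneg _ _ hp0.le, ← ENNReal.rpow_mul, ← ENNReal.rpow_mul,
            one_div_mul_cancel hp0.ne', ENNReal.rpow_one,
            show 1/q * p = p - 1 from by rw [← hpq.div_conj_eq_sub_one]; ring,
            ENNReal.ofReal_rpow_of_nonneg (by positivity) (by linarith : (0:ℝ) ≤ p - 1)]
  -- Step 2: bound the LHS
  have step2 : ∫⁻ x in Ioi (0:ℝ), (ENNReal.ofReal x) ^ (-r) *
        (∫⁻ y in Ioo (0:ℝ) x, ENNReal.ofReal (f y)) ^ p ≤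
      ENNReal.ofReal (s ^ (1 - p)) *
        ∫⁻ x in Ioi (0:ℝ), ENNReal.ofReal (x ^ (-s - 1)) * ∫⁻ y in Ioo (0:ℝ) x, G y := by
    rw [← lintegral_const_mul' _ _ ENNReal.ofReal_ne_top]
    refine lintegral_mono_ae (ae_restrict_of_forall_mem measurableSet_Ioi fun x hx => ?_)
    have hx : (0:ℝ) < x := hx
    have hreal : x ^ (-r) * (x ^ s / s) ^ (p - 1) = s ^ (1 - p) * x ^ (-s - 1) := by
      rw [Real.div_rpow (Real.rpow_nonneg hx.le s) hs.le, ← Real.rpow_mul hx.le,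
        div_eq_mul_inv, ← Real.rpow_neg hs.le, neg_sub, ← mul_assoc, ← Real.rpow_add hx,
        show -r + s * (p - 1) = -s - 1 from by linear_combination hsp, mul_comm]
    calc (ENNReal.ofReal x) ^ (-r) * (∫⁻ y in Ioo (0:ℝ) x, ENNReal.ofReal (f y)) ^ p
        ≤ (ENNReal.ofReal x) ^ (-r) *
            ((∫⁻ y in Ioo (0:ℝ) x, G y) * ENNReal.ofReal ((x ^ s / s) ^ (p - 1))) :=
          mul_le_mul_right (step1 x hx) _
      _ = ENNReal.ofReal (s ^ (1 - p)) *
            (ENNReal.ofReal (x ^ (-s - 1)) * ∫⁻ y in Ioo (0:ℝ) x, G y) := by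
          rw [ENNReal.ofReal_rpow_of_pos (p := -r) hx,
            mul_comm (∫⁻ y in Ioo (0:ℝ) x, G y) (ENNReal.ofReal ((x ^ s / s) ^ (p - 1))),
            ← mul_assoc, ← ENNReal.ofReal_mul (Real.rpow_nonneg hx.le _), hreal,
            ENNReal.ofReal_mul (by positivity : (0:ℝ) ≤ s ^ (1 - p)), mul_assoc]
  -- Step 3: Tonelli
  set U : ℝ × ℝ → ℝ≥0∞ := fun z =>
    {z : ℝ × ℝ | z.2 < z.1}.indicator (fun z => ENNReal.ofReal (z.1 ^ (-s - 1)) * G z.2) z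
    with hU_def
  have hUmeas : Measurable U := by
    refine Measurable.indicator ?_ (measurableSet_lt measurable_snd measurable_fst)
    exact ((measurable_fst.pow_const _).ennreal_ofReal).mul (hGmeas.comp measurable_snd)
  have step3 : ∫⁻ x in Ioi (0:ℝ), ENNReal.ofReal (x ^ (-s - 1)) * ∫⁻ y in Ioo (0:ℝ) x, G y
      = ∫⁻ y in Ioi (0:ℝ), G y * ENNReal.ofReal (y ^ (-s) / s) := by
    have hL : ∀ x ∈ Ioi (0:ℝ), ENNReal.ofReal (x ^ (-s - 1)) * ∫⁻ y in Ioo (0:ℝ) x, G y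
        = ∫⁻ y in Ioi (0:ℝ), U (x, y) := by
      intro x _
      have hcongr : ∀ y, U (x, y)
          = (Iio x).indicator (fun y => ENNReal.ofReal (x ^ (-s - 1)) * G y) y := by
        intro y
        simp only [hU_def, Set.indicator_apply, mem_setOf_eq, mem_Iio]
      simp_rw [hcongr]
      rw [lintegral_indicator measurableSet_Iio, Measure.restrict_restrict measurableSet_Iio,
        show Iio x ∩ Ioi (0:ℝ) = Ioo 0 x from by ext z; simp [mem_Ioo, and_comm],
        lintegral_const_mul' _ _ ENNReal.ofReal_ne_top]
    have hR : ∀ y ∈ Ioi (0:ℝ), ∫⁻ x in Ioi (0:ℝ), U (x, y)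
        = G y * ENNReal.ofReal (y ^ (-s) / s) := by
      intro y hy
      have hy : (0:ℝ) < y := hy
      have hcongr : ∀ x, U (x, y)
          = (Ioi y).indicator (fun x => ENNReal.ofReal (x ^ (-s - 1))) x * G y := by
        intro x
        simp only [hU_def, Set.indicator_apply, mem_setOf_eq, mem_Ioi]
        by_cases h : y < x
        · simp [h]
        · simp [h]
      simp_rw [hcongr]
      rw [lintegral_mul_const' _ _ (hGtop y),
        lintegral_indicator measurableSet_Ioi, Measure.restrict_restrict measurableSet_Ioi,
        show Ioi y ∩ Ioi (0:ℝ) = Ioi y from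
          inter_eq_self_of_subset_left (fun z hz => lt_trans hy hz),
        aux_lintegral_rpow_Ioi (by linarith : -s - 1 < -1) hy, mul_comm,
        show -s - 1 + 1 = -s from by ring]
      norm_num
    calc ∫⁻ x in Ioi (0:ℝ), ENNReal.ofReal (x ^ (-s - 1)) * ∫⁻ y in Ioo (0:ℝ) x, G y
        = ∫⁻ x in Ioi (0:ℝ), ∫⁻ y in Ioi (0:ℝ), U (x, y) :=
          setLIntegral_congr_fun measurableSet_Ioi hL
      _ = ∫⁻ y in Ioi (0:ℝ), ∫⁻ x in Ioi (0:ℝ), U (x, y) :=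
          lintegral_lintegral_swap hUmeas.aemeasurable
      _ = _ := setLIntegral_congr_fun measurableSet_Ioi hR
  -- Step 4: identify with the RHS
  have step4 : ENNReal.ofReal (s ^ (1 - p)) *
        ∫⁻ y in Ioi (0:ℝ), G y * ENNReal.ofReal (y ^ (-s) / s)
      = ENNReal.ofReal ((p / (r - 1)) ^ p) *
        ∫⁻ x in Ioi (0:ℝ), ENNReal.ofReal (x ^ (-r) * (x * f x) ^ p) := by
    rw [← lintegral_const_mul' _ _ ENNReal.ofReal_ne_top,
      ← lintegral_const_mul' _ _ ENNReal.ofReal_ne_top]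
    refine setLIntegral_congr_fun measurableSet_Ioi (fun y hy => ?_)
    have hy : (0:ℝ) < y := hy
    have h1 : ENNReal.ofReal (f y) ^ p = ENNReal.ofReal ((f y) ^ p) :=
      ENNReal.ofReal_rpow_of_nonneg (hf0 y) hp0.le
    rw [hG_def]
    simp only []
    have hA : (0:ℝ) ≤ (f y) ^ p := Real.rpow_nonneg (hf0 y) p
    have hB : (0:ℝ) ≤ (f y) ^ p * y ^ ((1-s)*(p-1)) :=
      mul_nonneg hA (Real.rpow_nonneg hy.le _)
    have hC : (0:ℝ) ≤ s ^ (1-p) := Real.rpow_nonneg hs.le _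
    have hD : (0:ℝ) ≤ (p / (r-1)) ^ p :=
      Real.rpow_nonneg (div_nonneg hp0.le (by linarith)) p
    rw [h1, ← ENNReal.ofReal_mul hA, ← ENNReal.ofReal_mul hB,
      ← ENNReal.ofReal_mul hC, ← ENNReal.ofReal_mul hD]
    congr 1
    have hy2 : y ^ ((1-s)*(p-1)) * y ^ (-s) = y ^ (p - r) := by
      rw [← Real.rpow_add hy]; congr 1; linear_combination -hsp
    have hs2 : s ^ (1-p) * s⁻¹ = s ^ (-p) := by
      rw [show s⁻¹ = s ^ (-1:ℝ) from (Real.rpow_neg_one s).symm, ← Real.rpow_add hs,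
        show (1:ℝ) - p + -1 = -p from by ring]
    calc s ^ (1-p) * ((f y) ^ p * y ^ ((1-s)*(p-1)) * (y ^ (-s) / s))
        = (s ^ (1-p) * s⁻¹) * ((f y) ^ p * (y ^ ((1-s)*(p-1)) * y ^ (-s))) := by ring
      _ = s ^ (-p) * ((f y) ^ p * y ^ (p - r)) := by rw [hy2, hs2]
      _ = (p / (r-1)) ^ p * (y ^ (-r) * (y * f y) ^ p) := by
          rw [hpr, Real.mul_rpow hy.le (hf0 y),
            show y ^ (p - r) = y ^ (-r) * y ^ p from by
              rw [← Real.rpow_add hy]; congr 1; ring]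
          ring
  calc ∫⁻ x in Ioi (0:ℝ), (ENNReal.ofReal x) ^ (-r) *
        (∫⁻ y in Ioo (0:ℝ) x, ENNReal.ofReal (f y)) ^ p
      ≤ ENNReal.ofReal (s ^ (1 - p)) *
          ∫⁻ x in Ioi (0:ℝ), ENNReal.ofReal (x ^ (-s - 1)) * ∫⁻ y in Ioo (0:ℝ) x, G y := step2
    _ = ENNReal.ofReal (s ^ (1 - p)) *
          ∫⁻ y in Ioi (0:ℝ), G y * ENNReal.ofReal (y ^ (-s) / s) := by rw [step3]
    _ = _ := step4
end

section
/- For measurable f:(0,∞)→ℝ with ∫₀^∞ f(x)²/x dx < ∞, the quantity ∫₀^∞ ( f(x)²/x − (f(x)/x²)∫₀^x f(y) dy ) dx is nonnegative. -/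
open MeasureTheory Set
open scoped ENNReal

/-- inner integral bound: ofReal of a real integral is at most the lintegral -/
lemma aux_ofReal_int_le (g : ℝ → ℝ) (hg : ∀ y, 0 ≤ g y) (s : Set ℝ) :
    ENNReal.ofReal (∫ y in s, g y) ≤ ∫⁻ y in s, ENNReal.ofReal (g y) := by
  by_cases h : IntegrableOn g s
  · exact le_of_eq (ofReal_integral_eq_lintegral_ofReal h (Filter.Eventually.of_forall hg))
  · rw [integral_undef h]; simp

/-- swapped inner integral: ∫⁻_{x>y} 1/x² = 1/y -/
lemma aux_inv_sq (y : ℝ) (hy : 0 < y) :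
    ∫⁻ x in Ioi y, ENNReal.ofReal ((x ^ 2)⁻¹) = ENNReal.ofReal y⁻¹ := by
  have h1 : ∫⁻ x in Ioi y, ENNReal.ofReal ((x ^ 2)⁻¹)
      = ∫⁻ x in Ioi y, ENNReal.ofReal (x ^ (-2 : ℝ)) := by
    refine setLIntegral_congr_fun measurableSet_Ioi (fun x hx => ?_)
    rw [Real.rpow_neg (le_of_lt (hy.trans hx)), Real.rpow_two]
  rw [h1, ← ofReal_integral_eq_lintegral_ofReal
      (integrableOn_Ioi_rpow_of_lt (by norm_num) hy)
      ((ae_restrict_iff' measurableSet_Ioi).2 (Filter.Eventually.of_forall fun x hx =>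
        Real.rpow_nonneg (le_of_lt (hy.trans hx)) _))]
  rw [integral_Ioi_rpow_of_lt (by norm_num) hy]
  rw [show (-2:ℝ)+1 = -1 by norm_num, Real.rpow_neg_one y, div_neg, div_one, neg_neg]

/-- the Tonelli swap computation -/
lemma swap_term (f : ℝ → ℝ) (hf : Measurable f) :
    ∫⁻ x in Ioi (0:ℝ), ∫⁻ y in Ioo (0:ℝ) x, ENNReal.ofReal (f y ^ 2 / (2 * x ^ 2))
      = ∫⁻ y in Ioi (0:ℝ), ENNReal.ofReal (f y ^ 2 / (2 * y)) := by
  set F : ℝ → ℝ → ℝ≥0∞ := fun x y =>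
    (Ioo (0:ℝ) x).indicator (fun y => ENNReal.ofReal (f y ^ 2 / 2) * ENNReal.ofReal ((x ^ 2)⁻¹)) y
    with hF
  have hFmeas : Measurable (fun p : ℝ × ℝ => F p.1 p.2) := by
    have : (fun p : ℝ × ℝ => F p.1 p.2) = ({p : ℝ × ℝ | 0 < p.2 ∧ p.2 < p.1}).indicator
        (fun p => ENNReal.ofReal (f p.2 ^ 2 / 2) * ENNReal.ofReal ((p.1 ^ 2)⁻¹)) := by
      funext p
      simp only [hF, indicator, mem_Ioo, mem_setOf_eq]
    rw [this]
    refine Measurable.indicator ?_ ?_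
    · exact (ENNReal.measurable_ofReal.comp ((hf.comp measurable_snd).pow_const 2 |>.div_const 2)).mul
        (ENNReal.measurable_ofReal.comp (((measurable_fst.pow_const 2).inv)))
    · exact MeasurableSet.inter (measurableSet_lt measurable_const measurable_snd)
        (measurableSet_lt measurable_snd measurable_fst)
  have inner_eq : ∀ x : ℝ, ∫⁻ y in Ioo (0:ℝ) x, ENNReal.ofReal (f y ^ 2 / (2 * x ^ 2))
      = ∫⁻ y, F x y := by
    intro x
    rw [hF, lintegral_indicator measurableSet_Ioo]
    refine setLIntegral_congr_fun measurableSet_Ioo (fun y hy => ?_)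
    rw [← ENNReal.ofReal_mul (by positivity)]
    congr 1
    field_simp
  calc ∫⁻ x in Ioi (0:ℝ), ∫⁻ y in Ioo (0:ℝ) x, ENNReal.ofReal (f y ^ 2 / (2 * x ^ 2))
      = ∫⁻ x, ∫⁻ y, F x y := by
        rw [← lintegral_indicator measurableSet_Ioi]
        congr 1
        funext x
        by_cases hx : x ∈ Ioi (0:ℝ)
        · rw [indicator_of_mem hx, inner_eq]
        · rw [indicator_of_notMem hx]
          have he : Ioo (0:ℝ) x = ∅ := Ioo_eq_empty (fun h : (0:ℝ) < x => hx h)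
          have : ∀ y : ℝ, F x y = 0 := by
            intro y; simp only [hF, he, indicator_empty, Pi.zero_apply]
          simp_rw [this, lintegral_zero]
    _ = ∫⁻ y, ∫⁻ x, F x y := lintegral_lintegral_swap hFmeas.aemeasurable
    _ = ∫⁻ y in Ioi (0:ℝ), ENNReal.ofReal (f y ^ 2 / (2 * y)) := by
        rw [← lintegral_indicator measurableSet_Ioi]
        congr 1
        funext y
        by_cases hy : y ∈ Ioi (0:ℝ)
        · rw [indicator_of_mem hy]
          have h1 : ∀ x : ℝ, F x y = (Ioi y).indicator
              (fun x => ENNReal.ofReal (f y ^ 2 / 2) * ENNReal.ofReal ((x ^ 2)⁻¹)) x := by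
            intro x
            simp only [hF, indicator, mem_Ioo, mem_Ioi]
            have : (0 < y ∧ y < x) ↔ y < x := and_iff_right (by exact hy)
            simp [this]
          calc ∫⁻ x, F x y = ∫⁻ x in Ioi y, ENNReal.ofReal (f y ^ 2 / 2) * ENNReal.ofReal ((x ^ 2)⁻¹) := by
                simp_rw [h1]; rw [lintegral_indicator measurableSet_Ioi]
            _ = ENNReal.ofReal (f y ^ 2 / 2) * ∫⁻ x in Ioi y, ENNReal.ofReal ((x ^ 2)⁻¹) :=
                lintegral_const_mul _ (ENNReal.measurable_ofReal.comp ((measurable_id.pow_const 2).inv))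
            _ = ENNReal.ofReal (f y ^ 2 / 2) * ENNReal.ofReal y⁻¹ := by rw [aux_inv_sq y hy]
            _ = ENNReal.ofReal (f y ^ 2 / (2 * y)) := by
                rw [← ENNReal.ofReal_mul (by positivity), ← div_div, div_eq_mul_inv (f y ^ 2 / 2)]
        · rw [indicator_of_notMem hy]
          have : ∀ x : ℝ, F x y = 0 := by
            intro x
            simp only [hF, indicator, mem_Ioo]
            have : ¬ (0 < y ∧ y < x) := fun h => hy h.1
            simp [this]
          simp_rw [this, lintegral_zero]

theorem key_lintegral (f : ℝ → ℝ) (hf : Measurable f) :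
    ∫⁻ x in Ioi (0:ℝ), ENNReal.ofReal (|f x| / x ^ 2 * ∫ y in Ioo (0:ℝ) x, |f y|)
      ≤ ∫⁻ x in Ioi (0:ℝ), ENNReal.ofReal (f x ^ 2 / x) := by
  have hfm : Measurable fun y => ENNReal.ofReal (|f y|) :=
    ENNReal.measurable_ofReal.comp hf.abs
  calc ∫⁻ x in Ioi (0:ℝ), ENNReal.ofReal (|f x| / x ^ 2 * ∫ y in Ioo (0:ℝ) x, |f y|)
      ≤ ∫⁻ x in Ioi (0:ℝ), ENNReal.ofReal (|f x| / x ^ 2) * ∫⁻ y in Ioo (0:ℝ) x,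
          ENNReal.ofReal (|f y|) := by
        refine lintegral_mono fun x => ?_
        rw [ENNReal.ofReal_mul (by positivity)]
        exact mul_le_mul_right (aux_ofReal_int_le (fun y => |f y|) (fun y => abs_nonneg _) _) _
    _ ≤ ∫⁻ x in Ioi (0:ℝ), (ENNReal.ofReal (f x ^ 2 / (2 * x)) +
          ∫⁻ y in Ioo (0:ℝ) x, ENNReal.ofReal (f y ^ 2 / (2 * x ^ 2))) := by
        refine lintegral_mono fun x => ?_
        by_cases hx : (0:ℝ) < x
        · have hx2 : (0:ℝ) < x ^ 2 := by positivity
          calc ENNReal.ofReal (|f x| / x ^ 2) * ∫⁻ y in Ioo (0:ℝ) x, ENNReal.ofReal (|f y|)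
              = ∫⁻ y in Ioo (0:ℝ) x, ENNReal.ofReal (|f x| / x ^ 2) * ENNReal.ofReal (|f y|) :=
                (lintegral_const_mul _ hfm).symm
            _ ≤ ∫⁻ y in Ioo (0:ℝ) x, (ENNReal.ofReal (f x ^ 2 / (2 * x ^ 2)) +
                  ENNReal.ofReal (f y ^ 2 / (2 * x ^ 2))) := by
                refine lintegral_mono fun y => ?_
                rw [← ENNReal.ofReal_mul (by positivity)]
                refine le_trans (ENNReal.ofReal_le_ofReal ?_) (ENNReal.ofReal_add_le)
                rw [← add_div, div_mul_eq_mul_div, div_le_div_iff₀ hx2 (by positivity)]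
                nlinarith [sq_nonneg (|f x| - |f y|), sq_abs (f x), sq_abs (f y), sq_nonneg x]
            _ = ENNReal.ofReal (f x ^ 2 / (2 * x ^ 2)) * volume (Ioo (0:ℝ) x) +
                  ∫⁻ y in Ioo (0:ℝ) x, ENNReal.ofReal (f y ^ 2 / (2 * x ^ 2)) := by
                rw [lintegral_add_left measurable_const, setLIntegral_const]
            _ = ENNReal.ofReal (f x ^ 2 / (2 * x)) +
                  ∫⁻ y in Ioo (0:ℝ) x, ENNReal.ofReal (f y ^ 2 / (2 * x ^ 2)) := by
                congr 1
                rw [Real.volume_Ioo, sub_zero, ← ENNReal.ofReal_mul (by positivity)]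
                congr 1
                field_simp
        · have he : Ioo (0:ℝ) x = ∅ := Ioo_eq_empty hx
          rw [he, Measure.restrict_empty, lintegral_zero_measure, mul_zero]
          exact zero_le
    _ = (∫⁻ x in Ioi (0:ℝ), ENNReal.ofReal (f x ^ 2 / (2 * x))) +
          ∫⁻ x in Ioi (0:ℝ), ∫⁻ y in Ioo (0:ℝ) x, ENNReal.ofReal (f y ^ 2 / (2 * x ^ 2)) :=
        lintegral_add_left (by fun_prop) _
    _ = (∫⁻ x in Ioi (0:ℝ), ENNReal.ofReal (f x ^ 2 / (2 * x))) +
          ∫⁻ x in Ioi (0:ℝ), ENNReal.ofReal (f x ^ 2 / (2 * x)) := by rw [swap_term f hf]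
    _ = ∫⁻ x in Ioi (0:ℝ), (ENNReal.ofReal (f x ^ 2 / (2 * x)) +
          ENNReal.ofReal (f x ^ 2 / (2 * x))) :=
        (lintegral_add_left (by fun_prop) _).symm
    _ = ∫⁻ x in Ioi (0:ℝ), ENNReal.ofReal (f x ^ 2 / x) := by
        refine setLIntegral_congr_fun measurableSet_Ioi
          (fun x hx => ?_)
        have hx' : (0:ℝ) < x := hx
        rw [← ENNReal.ofReal_add (by positivity) (by positivity)]
        congr 1
        have hx0 : x ≠ 0 := ne_of_gt hx'
        field_simp
        ring

theorem sign_computation (f : ℝ → ℝ) (hf : Measurable f)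
    (hint : IntegrableOn (fun x => f x ^ 2 / x) (Ioi 0)) :
    0 ≤ ∫ x in Ioi (0:ℝ), (f x ^ 2 / x - (f x / x ^ 2) * ∫ y in (0:ℝ)..x, f y) := by
  by_cases hI : IntegrableOn
      (fun x => f x ^ 2 / x - (f x / x ^ 2) * ∫ y in (0:ℝ)..x, f y) (Ioi 0)
  swap
  · rw [integral_undef hI]
  have hBint : IntegrableOn (fun x => (f x / x ^ 2) * ∫ y in (0:ℝ)..x, f y) (Ioi 0) := by
    have h := hint.sub hI
    have he : ((fun x => f x ^ 2 / x) - fun x => f x ^ 2 / x - f x / x ^ 2 * ∫ y in (0:ℝ)..x, f y)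
        = fun x => f x / x ^ 2 * ∫ y in (0:ℝ)..x, f y := by
      funext x; simp [Pi.sub_apply]
    rwa [he] at h
  rw [integral_sub hint hBint, sub_nonneg]
  have h1 : (∫ x in Ioi (0:ℝ), (f x / x ^ 2) * ∫ y in (0:ℝ)..x, f y)
      ≤ ∫ x in Ioi (0:ℝ), |(f x / x ^ 2) * ∫ y in (0:ℝ)..x, f y| :=
    integral_mono hBint hBint.abs fun x => le_abs_self _
  refine h1.trans ?_
  have hA_nonneg : ∀ᵐ x ∂(volume.restrict (Ioi (0:ℝ))), 0 ≤ f x ^ 2 / x := by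
    refine (ae_restrict_iff' measurableSet_Ioi).2 (Filter.Eventually.of_forall fun x hx => ?_)
    have hx' : (0:ℝ) < x := hx
    positivity
  rw [integral_eq_lintegral_of_nonneg_ae
      (Filter.Eventually.of_forall fun x => abs_nonneg _) hBint.abs.aestronglyMeasurable,
    integral_eq_lintegral_of_nonneg_ae hA_nonneg hint.aestronglyMeasurable]
  apply ENNReal.toReal_mono
  · exact ne_of_lt (lt_of_le_of_lt
      (lintegral_mono fun x => Real.ofReal_le_enorm _) hint.2)
  · calc ∫⁻ x in Ioi (0:ℝ), ENNReal.ofReal |(f x / x ^ 2) * ∫ y in (0:ℝ)..x, f y|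
        ≤ ∫⁻ x in Ioi (0:ℝ), ENNReal.ofReal (|f x| / x ^ 2 * ∫ y in Ioo (0:ℝ) x, |f y|) := by
          refine lintegral_mono_ae ((ae_restrict_iff' measurableSet_Ioi).2
            (Filter.Eventually.of_forall fun x hx => ?_))
          have hx' : (0:ℝ) < x := hx
          refine ENNReal.ofReal_le_ofReal ?_
          rw [abs_mul, abs_div, abs_pow, sq_abs]
          refine mul_le_mul_of_nonneg_left ?_ (by positivity)
          calc |∫ y in (0:ℝ)..x, f y| ≤ ∫ y in (0:ℝ)..x, |f y| :=
              intervalIntegral.abs_integral_le_integral_abs hx'.le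
            _ = ∫ y in Ioo (0:ℝ) x, |f y| := by
              rw [intervalIntegral.integral_of_le hx'.le, integral_Ioc_eq_integral_Ioo]
      _ ≤ _ := key_lintegral f hf
end

section
/- If w:(0,∞)→ℝ is continuously differentiable, compactly supported in [0,∞) (with w extended continuously to 0), and satisfies ∫₀^∞ w(x)²/x dx < ∞, then ∫₀^∞ w(x)·( w'(x) − d/dx[(1/x)∫₀^x w(y) dy] ) dx ≤ 0. -/
open MeasureTheory Set intervalIntegral Filter

section Aux

variable (w : ℝ → ℝ)

noncomputable def Wfun (x : ℝ) : ℝ := ∫ y in (0:ℝ)..x, w y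

noncomputable def gfun (x : ℝ) : ℝ := Wfun w x / x

noncomputable def Gfun (x : ℝ) : ℝ := w x / x - Wfun w x / x ^ 2

variable {w}

lemma hasDerivAt_Wfun (hw : Continuous w) (x : ℝ) : HasDerivAt (Wfun w) (w x) x :=
  intervalIntegral.integral_hasDerivAt_right (hw.intervalIntegrable _ _)
    (hw.stronglyMeasurable.stronglyMeasurableAtFilter) hw.continuousAt

lemma continuous_Wfun (hw : Continuous w) : Continuous (Wfun w) := by
  apply continuous_iff_continuousAt.2 (fun x => (hasDerivAt_Wfun hw x).continuousAt)

lemma hasDerivAt_avg (hw : Continuous w) {x : ℝ} (hx : x ≠ 0) :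
    HasDerivAt (fun z => (1 / z) * ∫ y in (0:ℝ)..z, w y) (Gfun w x) x := by
  have h1 : HasDerivAt (fun z : ℝ => 1 / z) (-(x ^ 2)⁻¹) x := by
    simpa [one_div] using hasDerivAt_inv hx
  have h2 := (h1.mul (hasDerivAt_Wfun hw x))
  refine h2.congr_deriv ?_
  simp only [Gfun, Wfun]
  field_simp
  ring

lemma deriv_avg (hw : Continuous w) {x : ℝ} (hx : x ≠ 0) :
    deriv (fun z => (1 / z) * ∫ y in (0:ℝ)..z, w y) x = Gfun w x :=
  (hasDerivAt_avg hw hx).deriv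

lemma hasDerivAt_gfun (hw : Continuous w) {x : ℝ} (hx : x ≠ 0) :
    HasDerivAt (gfun w) (Gfun w x) x := by
  have h := (hasDerivAt_Wfun hw x).div (hasDerivAt_id x) hx
  refine h.congr_deriv ?_
  simp only [Gfun, Wfun, id]
  field_simp

/-- The hypothesis `∫ w²/x < ∞` forces `w 0 = 0` for continuous `w`. -/
lemma w_zero (hw : Continuous w) (hint : IntegrableOn (fun x => w x ^ 2 / x) (Ioi 0)) :
    w 0 = 0 := by
  by_contra h0
  set c : ℝ := |w 0| with hc
  have hc0 : 0 < c := abs_pos.2 h0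
  obtain ⟨δ, hδ0, hδ⟩ := Metric.continuousAt_iff.1 hw.continuousAt (c / 2) (by linarith)
  have hlow : ∀ x ∈ Ioc (0:ℝ) (δ/2), c^2/4 ≤ w x ^ 2 := by
    intro x hx
    have hd : dist x 0 < δ := by
      rw [Real.dist_eq, sub_zero, abs_of_pos hx.1]
      linarith [hx.2]
    have := hδ hd
    rw [Real.dist_eq] at this
    have h1 : c / 2 ≤ |w x| := by
      have := abs_sub_abs_le_abs_sub (w 0) (w x)
      rw [abs_sub_comm] at this
      linarith [this, hδ hd, (Real.dist_eq (w x) (w 0)) ▸ hδ hd]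
    calc c^2/4 = (c/2)^2 := by ring
    _ ≤ |w x| ^ 2 := by nlinarith [abs_nonneg (w x)]
    _ = w x ^ 2 := sq_abs _
  have hmono : IntegrableOn (fun x => w x ^ 2 / x) (Ioc 0 (δ/2)) :=
    hint.mono_set (Ioc_subset_Ioi_self)
  have hint2 : IntegrableOn (fun x : ℝ => c^2/4 * x⁻¹) (Ioc 0 (δ/2)) := by
    apply Integrable.mono' hmono
    · exact ((measurable_const.mul measurable_inv).aestronglyMeasurable)
    · rw [ae_restrict_iff' measurableSet_Ioc]
      filter_upwards with x hx
      have hx0 : 0 < x := hx.1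
      rw [Real.norm_eq_abs, abs_of_nonneg (by positivity)]
      rw [div_eq_mul_inv]
      exact mul_le_mul_of_nonneg_right (hlow x hx) (by positivity)
  have hint3 : IntegrableOn (fun x : ℝ => x⁻¹) (Ioc 0 (δ/2)) := by
    have h2 := hint2.const_mul ((c^2/4)⁻¹)
    have : (fun x : ℝ => x⁻¹) = (fun x : ℝ => (c^2/4)⁻¹ * (c^2/4 * x⁻¹)) := by
      funext x
      rcases eq_or_ne x 0 with rfl | hx
      · simp
      · field_simp
    rw [IntegrableOn, this]
    exact h2
  have : IntervalIntegrable (fun x : ℝ => x⁻¹) volume 0 (δ/2) := by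
    rw [intervalIntegrable_iff_integrableOn_Ioc_of_le (by linarith)]
    exact hint3
  rw [intervalIntegrable_inv_iff] at this
  rcases this with h | h
  · linarith
  · exact h (by rw [uIcc_of_le (by linarith)]; exact ⟨le_refl 0, by linarith⟩)


noncomputable def Ffun (w : ℝ → ℝ) (x : ℝ) : ℝ := (w x ^ 2 - gfun w x ^ 2) / 2

noncomputable def Fd (w : ℝ → ℝ) (x : ℝ) : ℝ := w x * deriv w x - gfun w x * Gfun w x

lemma hasDerivAt_Ffun (hw : ContDiff ℝ 1 w) {x : ℝ} (hx : x ≠ 0) :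
    HasDerivAt (Ffun w) (Fd w x) x := by
  have h1 : HasDerivAt w (deriv w x) x := ((hw.differentiable one_ne_zero) x).hasDerivAt
  have h2 := hasDerivAt_gfun hw.continuous hx
  have h3 := ((h1.pow 2).sub (h2.pow 2)).div_const 2
  refine h3.congr_deriv ?_
  simp only [Fd]
  push_cast
  ring

lemma key_identity (hw : Continuous w) {x : ℝ} (hx : x ≠ 0) :
    w x * (deriv w x - Gfun w x) = Fd w x - x * Gfun w x ^ 2 := by
  have hxw : w x = gfun w x + x * Gfun w x := by
    simp only [gfun, Gfun]
    field_simp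
    ring
  simp only [Fd]
  linear_combination (-(Gfun w x)) * hxw

section Bounds

variable {w : ℝ → ℝ} {M : ℝ}

lemma abs_w_le (hM0 : 0 ≤ M) (hM : ∀ x y : ℝ, |w x - w y| ≤ M * |x - y|) (h0 : w 0 = 0)
    {x : ℝ} (hx : 0 ≤ x) : |w x| ≤ M * x := by
  simpa [h0, abs_of_nonneg hx] using hM x 0

lemma abs_W_le (hwc : Continuous w) (hM0 : 0 ≤ M)
    (hM : ∀ x y : ℝ, |w x - w y| ≤ M * |x - y|) (h0 : w 0 = 0)
    {x : ℝ} (hx : 0 ≤ x) : |Wfun w x| ≤ M * x * x := by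
  have hb : ∀ y ∈ Set.uIoc (0:ℝ) x, ‖w y‖ ≤ M * x := by
    intro y hy
    rw [uIoc_of_le hx] at hy
    rw [Real.norm_eq_abs]
    exact (abs_w_le hM0 hM h0 hy.1.le).trans (mul_le_mul_of_nonneg_left hy.2 hM0)
  have h := intervalIntegral.norm_integral_le_of_norm_le_const hb
  rw [Real.norm_eq_abs] at h
  calc |Wfun w x| ≤ M * x * |x - 0| := h
  _ = M * x * x := by rw [sub_zero, abs_of_nonneg hx]

lemma abs_g_le (hwc : Continuous w) (hM0 : 0 ≤ M)
    (hM : ∀ x y : ℝ, |w x - w y| ≤ M * |x - y|) (h0 : w 0 = 0)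
    {x : ℝ} (hx : 0 ≤ x) : |gfun w x| ≤ M * x := by
  rcases eq_or_lt_of_le hx with rfl | hx0
  · simp [gfun]
  · rw [gfun, abs_div, abs_of_pos hx0, div_le_iff₀ hx0]
    calc |Wfun w x| ≤ M * x * x := abs_W_le hwc hM0 hM h0 hx
    _ = M * x * x := rfl

lemma abs_G_le (hwc : Continuous w) (hM0 : 0 ≤ M)
    (hM : ∀ x y : ℝ, |w x - w y| ≤ M * |x - y|)
    {x : ℝ} (hx : 0 < x) : |Gfun w x| ≤ M := by
  have key : Gfun w x = (∫ y in (0:ℝ)..x, (w x - w y)) / x ^ 2 := by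
    rw [intervalIntegral.integral_sub (intervalIntegrable_const) (hwc.intervalIntegrable _ _),
      intervalIntegral.integral_const]
    simp only [Gfun, Wfun, smul_eq_mul, sub_zero]
    field_simp
  have hb : ∀ y ∈ Set.uIoc (0:ℝ) x, ‖w x - w y‖ ≤ M * x := by
    intro y hy
    rw [uIoc_of_le hx.le] at hy
    rw [Real.norm_eq_abs]
    refine (hM x y).trans ?_
    have : |x - y| ≤ x := by rw [abs_of_nonneg (by linarith [hy.1, hy.2])]; linarith [hy.1]
    exact mul_le_mul_of_nonneg_left this hM0
  have h := intervalIntegral.norm_integral_le_of_norm_le_const hb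
  rw [Real.norm_eq_abs, sub_zero, abs_of_pos hx] at h
  rw [key, abs_div, abs_of_pos (pow_pos hx 2), div_le_iff₀ (pow_pos hx 2)]
  calc |∫ y in (0:ℝ)..x, (w x - w y)| ≤ M * x * x := h
  _ = M * x ^ 2 := by ring

lemma continuousOn_gfun_Icc (hwc : Continuous w) (hM0 : 0 ≤ M)
    (hM : ∀ x y : ℝ, |w x - w y| ≤ M * |x - y|) (h0 : w 0 = 0)
    {R : ℝ} : ContinuousOn (gfun w) (Icc 0 R) := by
  intro x hx
  rcases eq_or_lt_of_le hx.1 with rfl | hx0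
  · have hg0 : gfun w 0 = 0 := by simp [gfun]
    rw [ContinuousWithinAt, hg0]
    refine squeeze_zero_norm' (a := fun y : ℝ => M * y) ?_ ?_
    · filter_upwards [self_mem_nhdsWithin] with y hy
      rw [Real.norm_eq_abs]
      exact abs_g_le hwc hM0 hM h0 hy.1
    · have h1 : Tendsto (fun y : ℝ => M * y) (nhdsWithin 0 (Icc 0 R)) (nhds (M * 0)) :=
        ((continuous_const.mul continuous_id).tendsto 0).mono_left nhdsWithin_le_nhds
      simpa using h1
  · exact ((hasDerivAt_gfun hwc hx0.ne').continuousAt).continuousWithinAt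

end Bounds

end Aux

theorem linear_stability (w : ℝ → ℝ) (hw : ContDiff ℝ 1 w) (hsupp : HasCompactSupport w)
    (hint : IntegrableOn (fun x => w x ^ 2 / x) (Ioi 0)) :
    ∫ x in Ioi (0:ℝ),
        w x * (deriv w x - deriv (fun z => (1 / z) * ∫ y in (0:ℝ)..z, w y) x) ≤ 0 := by
  have hwc : Continuous w := hw.continuous
  have h0 : w 0 = 0 := w_zero hwc hint
  -- Lipschitz bound
  obtain ⟨M₀, hM₀⟩ := hsupp.deriv.exists_bound_of_continuous (hw.continuous_deriv le_rfl)
  set M : ℝ := max M₀ 0 + 1 with hMdef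
  have hM0 : 0 ≤ M := by
    have := le_max_right M₀ 0
    linarith
  have hMd : ∀ x, |deriv w x| ≤ M := by
    intro x
    have h1 := hM₀ x
    rw [Real.norm_eq_abs] at h1
    have := le_max_left M₀ 0
    linarith
  have hM : ∀ x y : ℝ, |w x - w y| ≤ M * |x - y| := by
    intro x y
    have h1 := Convex.norm_image_sub_le_of_norm_deriv_le (s := univ)
      (fun z _ => (hw.differentiable one_ne_zero) z)
      (fun z _ => by rw [Real.norm_eq_abs]; exact hMd z) convex_univ (mem_univ y) (mem_univ x)
    simpa [Real.norm_eq_abs] using h1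
  -- support bound
  obtain ⟨r, hr⟩ := hsupp.isBounded.subset_closedBall 0
  set R : ℝ := |r| + 1 with hRdef
  have hR0 : (0:ℝ) < R := by positivity
  have hwR : ∀ x : ℝ, R ≤ x → w x = 0 := by
    intro x hx
    apply image_eq_zero_of_notMem_tsupport
    intro hmem
    have h1 := hr hmem
    rw [Metric.mem_closedBall, Real.dist_eq, sub_zero] at h1
    have h2 : x ≤ |r| := (le_abs_self x).trans (h1.trans (le_abs_self r))
    linarith
  -- pointwise bounds on Ioc 0 R
  have habs_w : ∀ x ∈ Ioc (0:ℝ) R, |w x| ≤ M * R := by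
    intro x hx
    exact (abs_w_le hM0 hM h0 hx.1.le).trans (mul_le_mul_of_nonneg_left hx.2 hM0)
  have habs_g : ∀ x ∈ Ioc (0:ℝ) R, |gfun w x| ≤ M * R := by
    intro x hx
    exact (abs_g_le hwc hM0 hM h0 hx.1.le).trans (mul_le_mul_of_nonneg_left hx.2 hM0)
  have habs_G : ∀ x ∈ Ioc (0:ℝ) R, |Gfun w x| ≤ M := fun x hx => abs_G_le hwc hM0 hM hx.1
  -- continuity on Ioc 0 R
  have hgC : ContinuousOn (gfun w) (Ioc 0 R) := fun x hx =>
    ((hasDerivAt_gfun hwc hx.1.ne').continuousAt).continuousWithinAt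
  have hGC : ContinuousOn (Gfun w) (Ioc 0 R) := by
    apply ContinuousOn.sub
    · exact hwc.continuousOn.div continuous_id.continuousOn (fun x hx => hx.1.ne')
    · exact (continuous_Wfun hwc).continuousOn.div (continuous_pow 2).continuousOn
        (fun x hx => pow_ne_zero _ hx.1.ne')
  have hFdC : ContinuousOn (Fd w) (Ioc 0 R) :=
    (hwc.continuousOn.mul (hw.continuous_deriv le_rfl).continuousOn).sub (hgC.mul hGC)
  have hqC : ContinuousOn (fun x => x * Gfun w x ^ 2) (Ioc 0 R) :=
    continuous_id.continuousOn.mul (hGC.pow 2)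
  -- integrability on Ioc 0 R
  have hconst : ∀ C : ℝ, IntegrableOn (fun _ : ℝ => C) (Ioc (0:ℝ) R) :=
    fun C => integrableOn_const (measure_Ioc_lt_top.ne)
  have hFdI : IntegrableOn (Fd w) (Ioc 0 R) := by
    refine Integrable.mono' (hconst (M * R * M + M * R * M))
      (hFdC.aestronglyMeasurable measurableSet_Ioc)
      ((ae_restrict_iff' measurableSet_Ioc).2 ?_)
    filter_upwards with x hx
    rw [Real.norm_eq_abs]
    calc |w x * deriv w x - gfun w x * Gfun w x|
        ≤ |w x * deriv w x| + |gfun w x * Gfun w x| := abs_sub _ _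
    _ = |w x| * |deriv w x| + |gfun w x| * |Gfun w x| := by rw [abs_mul, abs_mul]
    _ ≤ M * R * M + M * R * M := by
        gcongr
        · exact habs_w x hx
        · exact hMd x
        · exact habs_g x hx
        · exact habs_G x hx
  have hqI : IntegrableOn (fun x => x * Gfun w x ^ 2) (Ioc 0 R) := by
    refine Integrable.mono' (hconst (R * M ^ 2))
      (hqC.aestronglyMeasurable measurableSet_Ioc)
      ((ae_restrict_iff' measurableSet_Ioc).2 ?_)
    filter_upwards with x hx
    rw [Real.norm_eq_abs, abs_mul, abs_pow]
    gcongr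
    · rw [abs_of_pos hx.1]; exact hx.2
    · exact habs_G x hx
  -- pointwise identity on Ioc 0 R
  have hident : ∀ x ∈ Ioc (0:ℝ) R,
      w x * (deriv w x - deriv (fun z => (1 / z) * ∫ y in (0:ℝ)..z, w y) x)
        = Fd w x - x * Gfun w x ^ 2 := by
    intro x hx
    rw [deriv_avg hwc hx.1.ne']
    exact key_identity hwc hx.1.ne'
  have hfI : IntegrableOn
      (fun x => w x * (deriv w x - deriv (fun z => (1 / z) * ∫ y in (0:ℝ)..z, w y) x))
      (Ioc 0 R) :=
    IntegrableOn.congr_fun (hFdI.sub hqI) (fun x hx => (hident x hx).symm) measurableSet_Ioc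
  have hfI2 : IntegrableOn
      (fun x => w x * (deriv w x - deriv (fun z => (1 / z) * ∫ y in (0:ℝ)..z, w y) x))
      (Ioi R) := by
    refine IntegrableOn.congr_fun (integrableOn_zero) (fun x hx => ?_) measurableSet_Ioi
    rw [hwR x (le_of_lt hx), zero_mul]
  -- FTC
  have hFTC : ∫ x in Ioc (0:ℝ) R, Fd w x = Ffun w R - Ffun w 0 := by
    rw [← intervalIntegral.integral_of_le hR0.le]
    apply intervalIntegral.integral_eq_sub_of_hasDerivAt_of_le hR0.le
    · show ContinuousOn (fun x => (w x ^ 2 - gfun w x ^ 2) / 2) (Icc 0 R)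
      exact (((hwc.continuousOn).pow 2).sub
        ((continuousOn_gfun_Icc hwc hM0 hM h0).pow 2)).div_const 2
    · exact fun x hx => hasDerivAt_Ffun hw hx.1.ne'
    · rw [intervalIntegrable_iff_integrableOn_Ioc_of_le hR0.le]
      exact hFdI
  have hF0 : Ffun w 0 = 0 := by simp [Ffun, gfun, h0]
  have hFR : Ffun w R = -(gfun w R ^ 2) / 2 := by
    simp [Ffun, hwR R le_rfl]
  have hqpos : 0 ≤ ∫ x in Ioc (0:ℝ) R, x * Gfun w x ^ 2 :=
    setIntegral_nonneg measurableSet_Ioc (fun x hx => mul_nonneg hx.1.le (sq_nonneg _))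
  calc ∫ x in Ioi (0:ℝ),
        w x * (deriv w x - deriv (fun z => (1 / z) * ∫ y in (0:ℝ)..z, w y) x)
      = (∫ x in Ioc (0:ℝ) R,
          w x * (deriv w x - deriv (fun z => (1 / z) * ∫ y in (0:ℝ)..z, w y) x))
        + ∫ x in Ioi R,
          w x * (deriv w x - deriv (fun z => (1 / z) * ∫ y in (0:ℝ)..z, w y) x) := by
        rw [← setIntegral_union (Ioc_disjoint_Ioi le_rfl) measurableSet_Ioi hfI hfI2,
          Ioc_union_Ioi_eq_Ioi hR0.le]
  _ = (∫ x in Ioc (0:ℝ) R, (Fd w x - x * Gfun w x ^ 2)) + 0 := by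
        congr 1
        · exact setIntegral_congr_fun measurableSet_Ioc hident
        · rw [setIntegral_congr_fun measurableSet_Ioi
            (fun x hx => by rw [hwR x (le_of_lt hx), zero_mul] : EqOn _ (fun _ => (0:ℝ)) (Ioi R))]
          exact integral_zero _ _
  _ = (∫ x in Ioc (0:ℝ) R, Fd w x) - ∫ x in Ioc (0:ℝ) R, x * Gfun w x ^ 2 := by
        rw [add_zero]
        exact integral_sub hFdI hqI
  _ = (-(gfun w R ^ 2) / 2 - 0) - ∫ x in Ioc (0:ℝ) R, x * Gfun w x ^ 2 := by
        rw [hFTC, hF0, hFR]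
  _ ≤ 0 := by nlinarith [sq_nonneg (gfun w R)]
end

section
/- If f:(0,∞)→ℝ is measurable, not a.e. zero, and ∫₀^∞ f(x)²/x dx < ∞, then ∫₀^∞ (f(x)/x²)(∫₀^x f(y) dy) dx < ∫₀^∞ f(x)²/x dx (strict inequality). -/
open MeasureTheory Set

private lemma dual_hardy_ker {x : ℝ} (hx : 0 < x) :
    IntegrableOn (fun y : ℝ => ((max x y) ^ 2)⁻¹) (Ioi 0) ∧
      ∫ y in Ioi (0:ℝ), ((max x y) ^ 2)⁻¹ = 2 / x := by
  have hsplit : Ioc (0:ℝ) x ∪ Ioi x = Ioi 0 := Ioc_union_Ioi_eq_Ioi hx.le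
  have hdisj : Disjoint (Ioc (0:ℝ) x) (Ioi x) := by
    rw [Set.disjoint_left]
    intro a ha ha'
    exact absurd ha.2 (not_le.2 ha')
  have e1 : EqOn (fun _ : ℝ => (x ^ 2)⁻¹) (fun y : ℝ => ((max x y) ^ 2)⁻¹) (Ioc 0 x) := by
    intro y hy
    simp [max_eq_left hy.2]
  have e2 : EqOn (fun y : ℝ => y ^ (-2 : ℝ)) (fun y : ℝ => ((max x y) ^ 2)⁻¹) (Ioi x) := by
    intro y hy
    have hy' : x ≤ y := (mem_Ioi.1 hy).le
    have h0 : (0:ℝ) ≤ y := (hx.trans hy).le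
    simp only [max_eq_right hy']
    rw [← Real.rpow_natCast y 2, ← Real.rpow_neg h0]
    norm_num
  have i1 : IntegrableOn (fun y : ℝ => ((max x y) ^ 2)⁻¹) (Ioc 0 x) := by
    refine IntegrableOn.congr_fun ?_ e1 measurableSet_Ioc
    exact integrableOn_const (by simp [Real.volume_Ioc])
  have i2 : IntegrableOn (fun y : ℝ => ((max x y) ^ 2)⁻¹) (Ioi x) :=
    (integrableOn_Ioi_rpow_of_lt (by norm_num) hx).congr_fun e2 measurableSet_Ioi
  constructor
  · rw [← hsplit]; exact i1.union i2
  · rw [← hsplit, setIntegral_union hdisj measurableSet_Ioi i1 i2]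
    have v1 : ∫ y in Ioc (0:ℝ) x, ((max x y) ^ 2)⁻¹ = 1 / x := by
      rw [← setIntegral_congr_fun measurableSet_Ioc e1, setIntegral_const,
        measureReal_def, Real.volume_Ioc]
      rw [ENNReal.toReal_ofReal (by linarith)]
      rw [smul_eq_mul, pow_two, sub_zero]
      field_simp
    have v2 : ∫ y in Ioi x, ((max x y) ^ 2)⁻¹ = 1 / x := by
      rw [← setIntegral_congr_fun measurableSet_Ioi e2,
        integral_Ioi_rpow_of_lt (by norm_num) hx]
      norm_num
      exact Real.rpow_neg_one x
    rw [v1, v2]; ring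

theorem dual_hardy_strict (f : ℝ → ℝ) (hf : Measurable f)
    (hne : ¬ (f =ᵐ[volume.restrict (Ioi 0)] 0))
    (hint : IntegrableOn (fun x => f x ^ 2 / x) (Ioi 0)) :
    ∫ x in Ioi (0:ℝ), (f x / x ^ 2) * (∫ y in (0:ℝ)..x, f y) <
      ∫ x in Ioi (0:ℝ), f x ^ 2 / x := by
  set L : ℝ := ∫ x in Ioi (0:ℝ), (f x / x ^ 2) * (∫ y in (0:ℝ)..x, f y) with hL
  set A : ℝ := ∫ x in Ioi (0:ℝ), f x ^ 2 / x with hA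
  set μ : Measure ℝ := volume.restrict (Ioi 0) with hμ
  -- the kernel and the relevant functions on the product space
  set q1 : ℝ × ℝ → ℝ := fun p => f p.1 ^ 2 * ((max p.1 p.2) ^ 2)⁻¹ with hq1def
  set q2 : ℝ × ℝ → ℝ := fun p => f p.2 ^ 2 * ((max p.1 p.2) ^ 2)⁻¹ with hq2def
  set c : ℝ × ℝ → ℝ := fun p => f p.1 * f p.2 * ((max p.1 p.2) ^ 2)⁻¹ with hcdef
  set q : ℝ × ℝ → ℝ := fun p => (f p.1 - f p.2) ^ 2 * ((max p.1 p.2) ^ 2)⁻¹ with hqdef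
  set k₁ : ℝ × ℝ → ℝ := fun p => if p.2 ≤ p.1 then f p.1 * f p.2 / p.1 ^ 2 else 0 with hk₁def
  set k₂ : ℝ × ℝ → ℝ := fun p => if p.1 < p.2 then f p.1 * f p.2 / p.2 ^ 2 else 0 with hk₂def
  set k₂' : ℝ × ℝ → ℝ := fun p => if p.2 < p.1 then f p.2 * f p.1 / p.1 ^ 2 else 0 with hk₂'def
  have mker : Measurable fun p : ℝ × ℝ => ((max p.1 p.2) ^ 2)⁻¹ :=
    ((measurable_fst.max measurable_snd).pow_const 2).inv
  have mf1 : Measurable fun p : ℝ × ℝ => f p.1 := hf.comp measurable_fst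
  have mf2 : Measurable fun p : ℝ × ℝ => f p.2 := hf.comp measurable_snd
  have hker_nonneg : ∀ p : ℝ × ℝ, (0:ℝ) ≤ ((max p.1 p.2) ^ 2)⁻¹ := fun p =>
    inv_nonneg.2 (sq_nonneg _)
  -- integrability of q1
  have hq1m : Measurable q1 := (mf1.pow_const 2).mul mker
  have hq1 : Integrable q1 (μ.prod μ) := by
    rw [integrable_prod_iff hq1m.aestronglyMeasurable]
    constructor
    · filter_upwards [ae_restrict_mem measurableSet_Ioi] with x hx
      have hx' : (0:ℝ) < x := hx
      have h1 : Integrable (fun y => f x ^ 2 * ((max x y) ^ 2)⁻¹) μ :=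
        (dual_hardy_ker hx').1.const_mul (f x ^ 2)
      exact h1
    · apply (hint.const_mul 2).congr
      filter_upwards [ae_restrict_mem measurableSet_Ioi] with x hx
      have hnrm : (fun y => ‖q1 (x, y)‖) = fun y => f x ^ 2 * ((max x y) ^ 2)⁻¹ := by
        funext y
        exact Real.norm_of_nonneg (mul_nonneg (sq_nonneg _) (hker_nonneg (x, y)))
      rw [hnrm, integral_const_mul, (dual_hardy_ker hx).2]
      ring
  -- integrability of q2 via swap
  have hq2 : Integrable q2 (μ.prod μ) := by
    have h : q2 = (fun p : ℝ × ℝ => q1 p.swap) := by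
      funext p
      simp only [hq1def, hq2def, Prod.fst_swap, Prod.snd_swap, max_comm]
    rw [h]
    exact hq1.swap
  have hg : Integrable (fun p : ℝ × ℝ => q1 p + q2 p) (μ.prod μ) := hq1.add hq2
  have hgnonneg : ∀ p : ℝ × ℝ, 0 ≤ q1 p + q2 p := fun p =>
    add_nonneg (mul_nonneg (sq_nonneg _) (hker_nonneg p))
      (mul_nonneg (sq_nonneg _) (hker_nonneg p))
  have habs : ∀ p : ℝ × ℝ, |f p.1 * f p.2| * ((max p.1 p.2) ^ 2)⁻¹ ≤ q1 p + q2 p := by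
    intro p
    have h2 : |f p.1 * f p.2| ≤ f p.1 ^ 2 + f p.2 ^ 2 := by
      rw [abs_mul]
      nlinarith [sq_nonneg (|f p.1| - |f p.2|), sq_abs (f p.1), sq_abs (f p.2),
        abs_nonneg (f p.1), abs_nonneg (f p.2)]
    calc |f p.1 * f p.2| * ((max p.1 p.2) ^ 2)⁻¹
        ≤ (f p.1 ^ 2 + f p.2 ^ 2) * ((max p.1 p.2) ^ 2)⁻¹ :=
          mul_le_mul_of_nonneg_right h2 (hker_nonneg p)
      _ = q1 p + q2 p := by simp only [hq1def, hq2def]; ring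
  -- integrability of the cross term
  have hc : Integrable c (μ.prod μ) := by
    refine hg.mono' ((mf1.mul mf2).mul mker).aestronglyMeasurable (ae_of_all _ fun p => ?_)
    simp only [Real.norm_eq_abs, hcdef]
    calc |f p.1 * f p.2 * ((max p.1 p.2) ^ 2)⁻¹|
        = |f p.1 * f p.2| * ((max p.1 p.2) ^ 2)⁻¹ := by
          rw [abs_mul, abs_of_nonneg (hker_nonneg p)]
      _ ≤ q1 p + q2 p := habs p
  -- integrability of q
  have hq : Integrable q (μ.prod μ) := by
    refine (hg.const_mul 2).mono'
      (((mf1.sub mf2).pow_const 2).mul mker).aestronglyMeasurable (ae_of_all _ fun p => ?_)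
    simp only [Real.norm_eq_abs, hqdef]
    have hk := hker_nonneg p
    have : (f p.1 - f p.2) ^ 2 * ((max p.1 p.2) ^ 2)⁻¹
        ≤ 2 * (q1 p + q2 p) := by
      simp only [hq1def, hq2def]
      nlinarith [sq_nonneg (f p.1 + f p.2), hk]
    rwa [abs_of_nonneg (mul_nonneg (sq_nonneg _) hk)]
  -- integrability of k₁, k₂, k₂'
  have hk₁bound : ∀ p : ℝ × ℝ, ‖k₁ p‖ ≤ q1 p + q2 p := by
    intro p
    simp only [Real.norm_eq_abs, hk₁def]
    by_cases h : p.2 ≤ p.1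
    · rw [if_pos h]
      have hmax : max p.1 p.2 = p.1 := max_eq_left h
      calc |f p.1 * f p.2 / p.1 ^ 2| = |f p.1 * f p.2| * ((max p.1 p.2) ^ 2)⁻¹ := by
            rw [hmax, div_eq_mul_inv, abs_mul, abs_of_nonneg (inv_nonneg.2 (sq_nonneg p.1))]
        _ ≤ q1 p + q2 p := habs p
    · rw [if_neg h]; simpa using hgnonneg p
  have hk₂bound : ∀ p : ℝ × ℝ, ‖k₂ p‖ ≤ q1 p + q2 p := by
    intro p
    simp only [Real.norm_eq_abs, hk₂def]
    by_cases h : p.1 < p.2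
    · rw [if_pos h]
      have hmax : max p.1 p.2 = p.2 := max_eq_right h.le
      calc |f p.1 * f p.2 / p.2 ^ 2| = |f p.1 * f p.2| * ((max p.1 p.2) ^ 2)⁻¹ := by
            rw [hmax, div_eq_mul_inv, abs_mul, abs_of_nonneg (inv_nonneg.2 (sq_nonneg p.2))]
        _ ≤ q1 p + q2 p := habs p
    · rw [if_neg h]; simpa using hgnonneg p
  have hk₂'bound : ∀ p : ℝ × ℝ, ‖k₂' p‖ ≤ q1 p + q2 p := by
    intro p
    simp only [Real.norm_eq_abs, hk₂'def]
    by_cases h : p.2 < p.1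
    · rw [if_pos h]
      have hmax : max p.1 p.2 = p.1 := max_eq_left h.le
      calc |f p.2 * f p.1 / p.1 ^ 2| = |f p.1 * f p.2| * ((max p.1 p.2) ^ 2)⁻¹ := by
            rw [hmax, div_eq_mul_inv, abs_mul, abs_of_nonneg (inv_nonneg.2 (sq_nonneg p.1)),
              mul_comm (f p.2) (f p.1)]
        _ ≤ q1 p + q2 p := habs p
    · rw [if_neg h]; simpa using hgnonneg p
  have hk₁m : Measurable k₁ :=
    Measurable.ite (measurableSet_le measurable_snd measurable_fst)
      ((mf1.mul mf2).div (measurable_fst.pow_const 2)) measurable_const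
  have hk₂m : Measurable k₂ :=
    Measurable.ite (measurableSet_lt measurable_fst measurable_snd)
      ((mf1.mul mf2).div (measurable_snd.pow_const 2)) measurable_const
  have hk₂'m : Measurable k₂' :=
    Measurable.ite (measurableSet_lt measurable_snd measurable_fst)
      ((mf2.mul mf1).div (measurable_fst.pow_const 2)) measurable_const
  have hk₁ : Integrable k₁ (μ.prod μ) :=
    hg.mono' hk₁m.aestronglyMeasurable (ae_of_all _ hk₁bound)
  have hk₂ : Integrable k₂ (μ.prod μ) :=
    hg.mono' hk₂m.aestronglyMeasurable (ae_of_all _ hk₂bound)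
  have hk₂' : Integrable k₂' (μ.prod μ) :=
    hg.mono' hk₂'m.aestronglyMeasurable (ae_of_all _ hk₂'bound)
  -- evaluation of ∫ q1
  have hE1 : ∫ p, q1 p ∂(μ.prod μ) = 2 * A := by
    rw [integral_prod _ hq1, hA, show (2:ℝ) * ∫ x in Ioi (0:ℝ), f x ^ 2 / x
        = ∫ x in Ioi (0:ℝ), 2 * (f x ^ 2 / x) from (integral_const_mul 2 _).symm]
    apply integral_congr_ae
    filter_upwards [ae_restrict_mem measurableSet_Ioi] with x hx
    simp only [hq1def]
    rw [integral_const_mul, (dual_hardy_ker hx).2]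
    ring
  -- evaluation of ∫ q2 by symmetry
  have hE2 : ∫ p, q2 p ∂(μ.prod μ) = 2 * A := by
    have h : q2 = (fun p : ℝ × ℝ => q1 p.swap) := by
      funext p
      simp only [hq1def, hq2def, Prod.fst_swap, Prod.snd_swap, max_comm]
    rw [h, integral_prod_swap q1, hE1]
  -- evaluation of ∫ k₁
  have hIic : ∀ x : ℝ, Iic x ∩ Ioi (0:ℝ) = Ioc 0 x := by
    intro x; ext y; simp only [mem_inter_iff, mem_Iic, mem_Ioi, mem_Ioc]; tauto
  have hIio : ∀ x : ℝ, Iio x ∩ Ioi (0:ℝ) = Ioo 0 x := by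
    intro x; ext y; simp only [mem_inter_iff, mem_Iio, mem_Ioi, mem_Ioo]; tauto
  have hEk₁ : ∫ p, k₁ p ∂(μ.prod μ) = L := by
    rw [integral_prod _ hk₁, hL]
    apply integral_congr_ae
    filter_upwards [ae_restrict_mem measurableSet_Ioi] with x hx
    have h : (fun y => k₁ (x, y)) = fun y => (f x / x ^ 2) * (Iic x).indicator f y := by
      funext y
      by_cases h : y ≤ x
      · simp only [hk₁def, if_pos h, indicator_of_mem (mem_Iic.2 h)]
        ring
      · simp [hk₁def, if_neg h, indicator_of_notMem (fun hy => h (mem_Iic.1 hy))]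
    rw [h, integral_const_mul, integral_indicator measurableSet_Iic, hμ,
      Measure.restrict_restrict measurableSet_Iic, hIic x,
      intervalIntegral.integral_of_le hx.le]
  -- evaluation of ∫ k₂
  have hEk₂ : ∫ p, k₂ p ∂(μ.prod μ) = L := by
    have h : k₂' = (fun p : ℝ × ℝ => k₂ p.swap) := by
      funext p
      simp only [hk₂def, hk₂'def, Prod.fst_swap, Prod.snd_swap]
    have hswap : ∫ p, k₂ p ∂(μ.prod μ) = ∫ p, k₂' p ∂(μ.prod μ) := by
      rw [h, integral_prod_swap k₂]
    rw [hswap, integral_prod _ hk₂', hL]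
    apply integral_congr_ae
    filter_upwards [ae_restrict_mem measurableSet_Ioi] with x hx
    have h2 : (fun y => k₂' (x, y)) = fun y => (f x / x ^ 2) * (Iio x).indicator f y := by
      funext y
      by_cases h3 : y < x
      · simp only [hk₂'def, if_pos h3, indicator_of_mem (mem_Iio.2 h3)]
        ring
      · simp [hk₂'def, if_neg h3, indicator_of_notMem (fun hy => h3 (mem_Iio.1 hy))]
    rw [h2, integral_const_mul, integral_indicator measurableSet_Iio, hμ,
      Measure.restrict_restrict measurableSet_Iio, hIio x,
      ← integral_Ioc_eq_integral_Ioo, intervalIntegral.integral_of_le hx.le]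
  -- the cross term
  have hcsplit : ∀ p : ℝ × ℝ, c p = k₁ p + k₂ p := by
    intro p
    by_cases h : p.2 ≤ p.1
    · simp only [hcdef, hk₁def, hk₂def, if_pos h, if_neg (not_lt.2 h), add_zero,
        max_eq_left h, div_eq_mul_inv]
    · push_neg at h
      simp only [hcdef, hk₁def, hk₂def, if_neg (not_le.2 h), if_pos h, zero_add,
        max_eq_right h.le, div_eq_mul_inv]
  have hEc : ∫ p, c p ∂(μ.prod μ) = 2 * L := by
    rw [show c = fun p => k₁ p + k₂ p from funext hcsplit, integral_add hk₁ hk₂, hEk₁, hEk₂]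
    ring
  -- the main identity
  have hqsplit : q = fun p => q1 p + q2 p - 2 * c p := by
    funext p
    simp only [hqdef, hq1def, hq2def, hcdef]
    ring
  have hEq : ∫ p, q p ∂(μ.prod μ) = 4 * A - 4 * L := by
    rw [hqsplit, integral_sub hg (hc.const_mul 2), integral_add hq1 hq2, hE1, hE2,
      integral_const_mul, hEc]
    ring
  -- positivity of ∫ q
  have hqnonneg : 0 ≤ ∫ p, q p ∂(μ.prod μ) :=
    integral_nonneg fun p => mul_nonneg (sq_nonneg _) (hker_nonneg p)
  have hqne : ∫ p, q p ∂(μ.prod μ) ≠ 0 := by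
    intro h0
    have hz : q =ᵐ[μ.prod μ] 0 :=
      (integral_eq_zero_iff_of_nonneg
        (fun p => mul_nonneg (sq_nonneg _) (hker_nonneg p)) hq).1 h0
    have hmem : ∀ᵐ p ∂(μ.prod μ), p ∈ Ioi (0:ℝ) ×ˢ Ioi (0:ℝ) := by
      rw [hμ, Measure.prod_restrict]
      exact ae_restrict_mem (measurableSet_Ioi.prod measurableSet_Ioi)
    have heq : ∀ᵐ p ∂(μ.prod μ), f p.1 = f p.2 := by
      filter_upwards [hz, hmem] with p hp hpm
      have h1 : (0:ℝ) < p.1 := hpm.1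
      have hm : (0:ℝ) < max p.1 p.2 := lt_max_of_lt_left h1
      have hp' : (f p.1 - f p.2) ^ 2 * ((max p.1 p.2) ^ 2)⁻¹ = 0 := hp
      have h2 : ((max p.1 p.2) ^ 2)⁻¹ ≠ 0 := inv_ne_zero (pow_ne_zero _ hm.ne')
      have h3 := (mul_eq_zero.1 hp').resolve_right h2
      have h4 : f p.1 - f p.2 = 0 := by
        exact pow_eq_zero_iff two_ne_zero |>.1 h3
      linarith
    have h2 := Measure.ae_ae_of_ae_prod heq
    have hne0 : μ ≠ 0 := by
      rw [hμ]
      intro h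
      have := congrArg (fun m : Measure ℝ => m (Ioi (0:ℝ))) h
      simp [Real.volume_Ioi] at this
    have : (ae μ).NeBot := ae_neBot.2 hne0
    obtain ⟨x₀, hx₀⟩ := h2.exists
    by_cases hc0 : f x₀ = 0
    · refine hne ?_
      filter_upwards [hx₀] with y hy
      rw [← hy, hc0]
      rfl
    · have hint' : IntegrableOn (fun x : ℝ => f x₀ ^ 2 / x) (Ioi 0) := by
        apply hint.congr
        filter_upwards [hx₀] with y hy
        rw [hy]
      have hbad : IntegrableOn (fun x : ℝ => x ^ (-1:ℝ)) (Ioi 0) := by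
        have h3 := hint'.const_mul (f x₀ ^ 2)⁻¹
        refine IntegrableOn.congr_fun h3 ?_ measurableSet_Ioi
        intro y hy
        have hy0 : (0:ℝ) < y := hy
        show (f x₀ ^ 2)⁻¹ * (f x₀ ^ 2 / y) = y ^ (-1:ℝ)
        rw [Real.rpow_neg_one]
        field_simp
      exact not_integrableOn_Ioi_rpow (-1) hbad
  have hqpos : 0 < ∫ p, q p ∂(μ.prod μ) := hqnonneg.lt_of_ne (Ne.symm hqne)
  linarith
end

section
/- For measurable f:(0,∞)→ℝ with ∫₀^∞ f(x)²/x dx < ∞, the function x ↦ (f(x)/x²) ∫₀^x f(y) dy is integrable on (0,∞). -/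
open MeasureTheory Set
open scoped ENNReal

theorem cross_term_integrable (f : ℝ → ℝ) (hf : Measurable f)
    (hint : IntegrableOn (fun x => f x ^ 2 / x) (Ioi 0)) :
    IntegrableOn (fun x => (f x / x ^ 2) * ∫ y in (0:ℝ)..x, f y) (Ioi 0) := by
  set F : ℝ → ℝ := fun x => ∫ y in (0:ℝ)..x, f y with hFdef
  -- local integrability of f on (0, x]
  have hfloc : ∀ x : ℝ, 0 < x → IntegrableOn f (Ioc 0 x) := by
    intro x hx
    have h1 : IntegrableOn (fun y => f y ^ 2 / y) (Ioc 0 x) :=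
      hint.mono_set (fun y hy => hy.1)
    have h2 : IntegrableOn (fun y => (f y ^ 2 / y + y) / 2) (Ioc 0 x) :=
      (h1.add (continuous_id.integrableOn_Ioc)).div_const 2
    refine Integrable.mono' h2 (hf.aestronglyMeasurable) ?_
    rw [ae_restrict_iff' measurableSet_Ioc]
    filter_upwards with y hy
    have hy0 : 0 < y := hy.1
    have h4 : (f y ^ 2 / y + y) / 2 = (f y ^ 2 + y ^ 2) / (2 * y) := by
      field_simp
    have : |f y| ≤ (f y ^ 2 / y + y) / 2 := by
      rw [h4, le_div_iff₀ (by positivity)]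
      nlinarith [sq_nonneg (|f y| - y), sq_abs (f y)]
    simpa [Real.norm_eq_abs] using this
  -- continuity hence measurability of F on (0, ∞)
  have hFcont : ContinuousOn F (Ioi 0) := by
    intro x₀ hx₀
    have hx₀' : (0:ℝ) < x₀ := hx₀
    apply ContinuousAt.continuousWithinAt
    have h_int : IntervalIntegrable f volume (min 0 (x₀/2)) (max 0 (x₀+1)) := by
      rw [min_eq_left (by linarith), max_eq_right (by linarith)]
      rw [intervalIntegrable_iff_integrableOn_Ioc_of_le (by linarith)]
      exact hfloc _ (by linarith)
    have h := intervalIntegral.continuousWithinAt_primitive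
      (b₀ := x₀) (measure_singleton x₀) h_int
    exact h.continuousAt (Icc_mem_nhds (by linarith) (by linarith))
  have hFae : AEMeasurable F (volume.restrict (Ioi 0)) :=
    hFcont.aemeasurable measurableSet_Ioi
  -- the weight function
  set W : ℝ → ℝ≥0∞ := fun y => ENNReal.ofReal (f y ^ 2 / y * y ^ ((1:ℝ)/2)) with hWdef
  have hWmeas : Measurable W := by fun_prop
  set M : ℝ≥0∞ := ∫⁻ y in Ioi 0, ENNReal.ofReal (f y ^ 2 / y) with hMdef
  have hMfin : M < ⊤ := by
    refine lt_of_le_of_lt ?_ hint.2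
    apply lintegral_mono
    intro y
    calc ENNReal.ofReal (f y ^ 2 / y) ≤ ENNReal.ofReal |f y ^ 2 / y| :=
          ENNReal.ofReal_le_ofReal (le_abs_self _)
      _ = ↑‖f y ^ 2 / y‖₊ := by rw [← Real.norm_eq_abs]; exact ENNReal.ofReal_eq_coe_nnreal (norm_nonneg _)
  -- Cauchy–Schwarz bound : ofReal (F x ^ 2) ≤ (∫⁻ W on Ioc 0 x) * ofReal (x * x^(1/2))
  have hCS : ∀ x : ℝ, 0 < x →
      ENNReal.ofReal (F x ^ 2) ≤
        (∫⁻ y in Ioc 0 x, W y) * ENNReal.ofReal (x ^ ((1:ℝ)/2) * x) := by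
    intro x hx
    set u : ℝ → ℝ≥0∞ := fun y => ENNReal.ofReal (|f y| * y ^ (-(1/4) : ℝ)) with hudef
    set v : ℝ → ℝ≥0∞ := fun y => ENNReal.ofReal (y ^ ((1:ℝ)/4)) with hvdef
    have hu : AEMeasurable u (volume.restrict (Ioc 0 x)) := by fun_prop
    have hv : AEMeasurable v (volume.restrict (Ioc 0 x)) := by fun_prop
    have hconj : Real.HolderConjugate 2 2 := Real.HolderConjugate.two_two
    have hCS0 := ENNReal.lintegral_mul_le_Lp_mul_Lq (volume.restrict (Ioc 0 x)) hconj hu hv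
    -- ∫⁻ u*v = ∫⁻ ofReal |f|
    have huv : ∫⁻ y in Ioc 0 x, (u * v) y = ∫⁻ y in Ioc 0 x, ENNReal.ofReal |f y| := by
      apply lintegral_congr_ae
      filter_upwards [self_mem_ae_restrict measurableSet_Ioc] with y hy
      have hy0 : 0 < y := hy.1
      simp only [Pi.mul_apply, hudef, hvdef]
      rw [← ENNReal.ofReal_mul (by positivity)]
      congr 1
      rw [mul_assoc, ← Real.rpow_add hy0]
      norm_num
    -- ∫⁻ u^2 = ∫⁻ W
    have hu2 : ∫⁻ y in Ioc 0 x, u y ^ (2:ℝ) = ∫⁻ y in Ioc 0 x, W y := by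
      apply lintegral_congr_ae
      filter_upwards [self_mem_ae_restrict measurableSet_Ioc] with y hy
      have hy0 : 0 < y := hy.1
      simp only [hudef, hWdef]
      rw [ENNReal.ofReal_rpow_of_nonneg (by positivity) (by norm_num)]
      congr 1
      rw [Real.mul_rpow (abs_nonneg _) (Real.rpow_nonneg hy0.le _)]
      rw [← Real.rpow_mul hy0.le]
      rw [show (-(1/4) * 2 : ℝ) = -1 + 1/2 by norm_num, Real.rpow_add hy0, Real.rpow_neg_one]
      rw [show ((2:ℝ)) = ((2:ℕ):ℝ) by norm_num, Real.rpow_natCast, sq_abs]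
      ring
    -- ∫⁻ v^2 ≤ ofReal (x^(1/2)) * ofReal x
    have hv2 : ∫⁻ y in Ioc 0 x, v y ^ (2:ℝ) ≤ ENNReal.ofReal (x ^ ((1:ℝ)/2)) * ENNReal.ofReal x := by
      have hb : ∀ᵐ y ∂(volume.restrict (Ioc 0 x)),
          v y ^ (2:ℝ) ≤ ENNReal.ofReal (x ^ ((1:ℝ)/2)) := by
        rw [ae_restrict_iff' measurableSet_Ioc]
        filter_upwards with y hy
        simp only [hvdef]
        rw [ENNReal.ofReal_rpow_of_nonneg (Real.rpow_nonneg hy.1.le _) (by norm_num)]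
        apply ENNReal.ofReal_le_ofReal
        rw [← Real.rpow_mul hy.1.le, show ((1:ℝ)/4*2) = (1:ℝ)/2 by norm_num]
        exact Real.rpow_le_rpow hy.1.le hy.2 (by norm_num)
      calc ∫⁻ y in Ioc 0 x, v y ^ (2:ℝ)
          ≤ ∫⁻ _ in Ioc 0 x, ENNReal.ofReal (x ^ ((1:ℝ)/2)) := lintegral_mono_ae hb
        _ = ENNReal.ofReal (x ^ ((1:ℝ)/2)) * ENNReal.ofReal x := by
            rw [lintegral_const, Measure.restrict_apply_univ, Real.volume_Ioc]
            simp
    -- |F x| bound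
    have hFle : ENNReal.ofReal |F x| ≤ ∫⁻ y in Ioc 0 x, ENNReal.ofReal |f y| := by
      have hFx : F x = ∫ y in Ioc 0 x, f y := intervalIntegral.integral_of_le hx.le
      have h1 : |F x| ≤ ∫ y in Ioc 0 x, |f y| := by
        rw [hFx]
        simpa [Real.norm_eq_abs] using
          norm_integral_le_integral_norm (μ := volume.restrict (Ioc 0 x)) f
      have h2 : ENNReal.ofReal (∫ y in Ioc 0 x, |f y|)
          = ∫⁻ y in Ioc 0 x, ENNReal.ofReal |f y| := by
        apply ofReal_integral_eq_lintegral_ofReal ((hfloc x hx).abs)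
        filter_upwards with y using abs_nonneg _
      calc ENNReal.ofReal |F x| ≤ ENNReal.ofReal (∫ y in Ioc 0 x, |f y|) :=
            ENNReal.ofReal_le_ofReal h1
        _ = _ := h2
    -- combine
    have hmain : ENNReal.ofReal |F x| ≤
        (∫⁻ y in Ioc 0 x, W y) ^ ((1:ℝ)/2) *
          (ENNReal.ofReal (x ^ ((1:ℝ)/2)) * ENNReal.ofReal x) ^ ((1:ℝ)/2) := by
      refine hFle.trans ?_
      rw [← huv]
      refine hCS0.trans ?_
      rw [hu2]
      gcongr
    have hsq := mul_le_mul' hmain hmain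
    have hrw : ∀ a : ℝ≥0∞, a ^ ((1:ℝ)/2) * a ^ ((1:ℝ)/2) = a := by
      intro a
      rw [← ENNReal.rpow_add_of_nonneg _ _ (by norm_num) (by norm_num)]
      norm_num
    calc ENNReal.ofReal (F x ^ 2)
        = ENNReal.ofReal |F x| * ENNReal.ofReal |F x| := by
          rw [← ENNReal.ofReal_mul (abs_nonneg _)]
          congr 1
          rw [← sq_abs (F x), sq]
      _ ≤ _ := hsq
      _ = (∫⁻ y in Ioc 0 x, W y) * (ENNReal.ofReal (x ^ ((1:ℝ)/2)) * ENNReal.ofReal x) := by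
          rw [mul_mul_mul_comm, hrw, hrw]
      _ = (∫⁻ y in Ioc 0 x, W y) * ENNReal.ofReal (x ^ ((1:ℝ)/2) * x) := by
          rw [← ENNReal.ofReal_mul (Real.rpow_nonneg hx.le _)]
  -- the Hardy-type bound on K = ∫⁻ F²/x³
  set K : ℝ≥0∞ := ∫⁻ x in Ioi 0, ENNReal.ofReal (F x ^ 2 / x ^ 3) with hKdef
  have hKle : K ≤ 2 * M := by
    have hpoint : ∀ x ∈ Ioi (0:ℝ), ENNReal.ofReal (F x ^ 2 / x ^ 3) ≤
        ∫⁻ y in Ioi 0, (Ioc 0 x).indicator W y * ENNReal.ofReal (x ^ (-(3/2) : ℝ)) := by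
      intro x hx
      have hx : (0:ℝ) < x := hx
      have e1 : ∫⁻ y in Ioi 0, (Ioc 0 x).indicator W y * ENNReal.ofReal (x ^ (-(3/2) : ℝ))
          = (∫⁻ y in Ioc 0 x, W y) * ENNReal.ofReal (x ^ (-(3/2) : ℝ)) := by
        rw [lintegral_mul_const _ (hWmeas.indicator measurableSet_Ioc),
          lintegral_indicator measurableSet_Ioc, Measure.restrict_restrict measurableSet_Ioc,
          inter_eq_left.mpr (fun y hy => hy.1)]
      rw [e1]
      have e2 : ENNReal.ofReal (F x ^ 2 / x ^ 3)
          = ENNReal.ofReal (F x ^ 2) * ENNReal.ofReal ((x ^ 3)⁻¹) := by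
        rw [div_eq_mul_inv, ENNReal.ofReal_mul (sq_nonneg _)]
      rw [e2]
      have e3 : ENNReal.ofReal (x ^ ((1:ℝ)/2) * x) * ENNReal.ofReal ((x ^ 3)⁻¹)
          = ENNReal.ofReal (x ^ (-(3/2) : ℝ)) := by
        rw [← ENNReal.ofReal_mul (by positivity)]
        congr 1
        have hxne : x ≠ 0 := hx.ne'
        rw [show (x:ℝ) ^ (3:ℕ) = x ^ ((3:ℕ):ℝ) from (Real.rpow_natCast x 3).symm]
        rw [← Real.rpow_neg hx.le]
        nth_rewrite 2 [show (x:ℝ) = x ^ (1:ℝ) from (Real.rpow_one x).symm]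
        rw [← Real.rpow_add hx, ← Real.rpow_add hx]
        norm_num
      calc ENNReal.ofReal (F x ^ 2) * ENNReal.ofReal ((x ^ 3)⁻¹)
          ≤ (∫⁻ y in Ioc 0 x, W y) * ENNReal.ofReal (x ^ ((1:ℝ)/2) * x)
              * ENNReal.ofReal ((x ^ 3)⁻¹) := by
            gcongr
            exact hCS x hx
        _ = (∫⁻ y in Ioc 0 x, W y) * ENNReal.ofReal (x ^ (-(3/2) : ℝ)) := by
            rw [mul_assoc, e3]
    -- iterated integral and swap
    set H : ℝ → ℝ → ℝ≥0∞ := fun x y =>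
      (Ioc 0 x).indicator W y * ENNReal.ofReal (x ^ (-(3/2) : ℝ)) with hHdef
    have hHmeas : Measurable (Function.uncurry H) := by
      have h1 : (Function.uncurry H) = fun p : ℝ × ℝ =>
          ({q : ℝ × ℝ | 0 < q.2 ∧ q.2 ≤ q.1}.indicator (fun q => W q.2) p) *
            ENNReal.ofReal (p.1 ^ (-(3/2) : ℝ)) := by
        ext p
        simp only [Function.uncurry, hHdef, Set.indicator_apply, mem_Ioc, mem_setOf_eq]
      rw [h1]
      have hS : MeasurableSet {q : ℝ × ℝ | 0 < q.2 ∧ q.2 ≤ q.1} := by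
        exact (measurableSet_lt measurable_const measurable_snd).inter
          (measurableSet_le measurable_snd measurable_fst)
      exact ((hWmeas.comp measurable_snd).indicator hS).mul (by fun_prop)
    have hswap : ∫⁻ x in Ioi 0, ∫⁻ y in Ioi 0, H x y
        = ∫⁻ y in Ioi 0, ∫⁻ x in Ioi 0, H x y :=
      lintegral_lintegral_swap hHmeas.aemeasurable
    -- compute inner integral after swapping
    have hinner : ∀ y ∈ Ioi (0:ℝ), (∫⁻ x in Ioi 0, H x y)
        = W y * ENNReal.ofReal (2 * y ^ (-(1/2) : ℝ)) := by
      intro y hy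
      have hy : (0:ℝ) < y := hy
      have e4 : ∀ x : ℝ, H x y = (Ici y).indicator
          (fun x => W y * ENNReal.ofReal (x ^ (-(3/2) : ℝ))) x := by
        intro x
        simp only [hHdef, Set.indicator_apply, mem_Ioc, mem_Ici]
        by_cases hxy : y ≤ x
        · simp [hxy, hy]
        · simp [hxy]
      calc ∫⁻ x in Ioi 0, H x y
          = ∫⁻ x in Ici y, W y * ENNReal.ofReal (x ^ (-(3/2) : ℝ)) := by
            simp_rw [e4]
            rw [lintegral_indicator measurableSet_Ici,
              Measure.restrict_restrict measurableSet_Ici]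
            have hsub : Ici y ∩ Ioi 0 = Ici y := by
              rw [inter_eq_left]
              intro x hx
              exact lt_of_lt_of_le hy hx
            rw [hsub]
        _ = W y * ∫⁻ x in Ici y, ENNReal.ofReal (x ^ (-(3/2) : ℝ)) := by
            rw [lintegral_const_mul _ (by fun_prop)]
        _ = W y * ENNReal.ofReal (2 * y ^ (-(1/2) : ℝ)) := by
            congr 1
            rw [← setLIntegral_congr Ioi_ae_eq_Ici]
            rw [← ofReal_integral_eq_lintegral_ofReal
              (integrableOn_Ioi_rpow_of_lt (by norm_num) hy) ?_]
            · congr 1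
              rw [integral_Ioi_rpow_of_lt (by norm_num) hy]
              rw [show (-(3/2) + 1 : ℝ) = -(1/2) by norm_num]
              ring
            · filter_upwards [self_mem_ae_restrict measurableSet_Ioi] with x hx
              exact Real.rpow_nonneg (le_of_lt (lt_trans hy hx)) _
    -- put it together
    calc K ≤ ∫⁻ x in Ioi 0, ∫⁻ y in Ioi 0, H x y := by
          refine lintegral_mono_ae ?_
          filter_upwards [self_mem_ae_restrict measurableSet_Ioi] with x hx
          exact hpoint x hx
      _ = ∫⁻ y in Ioi 0, ∫⁻ x in Ioi 0, H x y := hswap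
      _ = ∫⁻ y in Ioi 0, W y * ENNReal.ofReal (2 * y ^ (-(1/2) : ℝ)) := by
          apply lintegral_congr_ae
          filter_upwards [self_mem_ae_restrict measurableSet_Ioi] with y hy
          exact hinner y hy
      _ = ∫⁻ y in Ioi 0, 2 * ENNReal.ofReal (f y ^ 2 / y) := by
          apply lintegral_congr_ae
          filter_upwards [self_mem_ae_restrict measurableSet_Ioi] with y hy
          have hy : (0:ℝ) < y := hy
          rw [hWdef]
          simp only
          rw [← ENNReal.ofReal_mul (by positivity)]
          rw [show (2:ℝ≥0∞) = ENNReal.ofReal (2:ℝ) by simp]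
          rw [← ENNReal.ofReal_mul (by norm_num)]
          congr 1
          have : y ^ ((1:ℝ)/2) * y ^ (-(1/2):ℝ) = 1 := by
            rw [← Real.rpow_add hy]
            norm_num
          calc f y ^ 2 / y * y ^ ((1:ℝ)/2) * (2 * y ^ (-(1/2):ℝ))
              = 2 * (f y ^ 2 / y) * (y ^ ((1:ℝ)/2) * y ^ (-(1/2):ℝ)) := by ring
            _ = 2 * (f y ^ 2 / y) := by rw [this, mul_one]
      _ = 2 * M := by
          rw [hMdef, lintegral_const_mul _ (by fun_prop)]
  -- conclusion
  have hKfin : K < ⊤ := lt_of_le_of_lt hKle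
    (ENNReal.mul_lt_top (by norm_num) hMfin)
  constructor
  · apply AEStronglyMeasurable.mul
    · exact ((hf.div (measurable_id.pow_const 2)).aestronglyMeasurable)
    · exact hFae.aestronglyMeasurable
  · rw [hasFiniteIntegral_iff_norm]
    have hbound : ∀ x ∈ Ioi (0:ℝ),
        ENNReal.ofReal ‖(f x / x ^ 2) * F x‖ ≤
          ENNReal.ofReal (f x ^ 2 / x) + ENNReal.ofReal (F x ^ 2 / x ^ 3) := by
      intro x hx
      have hx : (0:ℝ) < x := hx
      have h3 : (0:ℝ) < x ^ 3 := by positivity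
      have key : |f x / x ^ 2 * F x| ≤ f x ^ 2 / x + F x ^ 2 / x ^ 3 := by
        have e1 : f x ^ 2 / x + F x ^ 2 / x ^ 3 = (f x ^ 2 * x ^ 2 + F x ^ 2) / x ^ 3 := by
          field_simp
        have e2 : |f x / x ^ 2 * F x| = (|f x| * |F x| * x) / x ^ 3 := by
          rw [abs_mul, abs_div, abs_pow, abs_of_pos hx]
          field_simp
        rw [e1, e2, div_le_div_iff₀ h3 h3]
        have h5 : |f x| * |F x| * x ≤ f x ^ 2 * x ^ 2 + F x ^ 2 := by
          nlinarith [sq_nonneg (|f x| * x - |F x|), sq_abs (f x), sq_abs (F x),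
            mul_nonneg (mul_nonneg (abs_nonneg (f x)) (abs_nonneg (F x))) hx.le]
        exact mul_le_mul_of_nonneg_right h5 h3.le
      calc ENNReal.ofReal ‖(f x / x ^ 2) * F x‖
          = ENNReal.ofReal |f x / x ^ 2 * F x| := by rw [Real.norm_eq_abs]
        _ ≤ ENNReal.ofReal (f x ^ 2 / x + F x ^ 2 / x ^ 3) := ENNReal.ofReal_le_ofReal key
        _ ≤ _ := ENNReal.ofReal_add_le
    calc ∫⁻ x in Ioi 0, ENNReal.ofReal ‖(f x / x ^ 2) * F x‖
        ≤ ∫⁻ x in Ioi 0,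
            (ENNReal.ofReal (f x ^ 2 / x) + ENNReal.ofReal (F x ^ 2 / x ^ 3)) := by
          refine lintegral_mono_ae ?_
          filter_upwards [self_mem_ae_restrict measurableSet_Ioi] with x hx
          exact hbound x hx
      _ = M + K := by
          rw [lintegral_add_left (by fun_prop)]
      _ < ⊤ := ENNReal.add_lt_top.mpr ⟨hMfin, hKfin⟩
end
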